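/- arXiv:2303.02614 — 4 statements merged into one kernel-verified Lean document; each statement's English description precedes it below -/
import Mathlib

section
/- The direct limit of a chain of structures {M_x : x ∈ X} indexed by a well-ordered poset X is isomorphic to the prime product ∏_{x∈X} M_x / F, where F = { ↑x : x ∈ X } is the filter of principal upsets. -/
namespace PosLogic

open FirstOrder FirstOrder.Language FirstOrder.Language.Structure Set

universe u v w x y z

variable {L : FirstOrder.Language.{u, v}}

/-- Positive formulas: built from atomic formulas and `⊥` using `∧`, `∨` and `∃`. -/
inductive PosFormula (L : FirstOrder.Language.{u, v}) (α : Type y) : ℕ → Type (max u v y)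
  | falsum {n : ℕ} : PosFormula L α n
  | equal {n : ℕ} (t₁ t₂ : L.Term (α ⊕ Fin n)) : PosFormula L α n
  | rel {n l : ℕ} (R : L.Relations l) (ts : Fin l → L.Term (α ⊕ Fin n)) : PosFormula L α n
  | and {n : ℕ} (φ ψ : PosFormula L α n) : PosFormula L α n
  | or {n : ℕ} (φ ψ : PosFormula L α n) : PosFormula L α n
  | ex {n : ℕ} (φ : PosFormula L α (n + 1)) : PosFormula L α n

variable {α : Type y}

/-- Realization (satisfaction) of a positive formula. -/
def PosFormula.Realize {M : Type w} [L.Structure M] :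
    ∀ {n : ℕ}, PosFormula L α n → (α → M) → (Fin n → M) → Prop
  | _, .falsum, _, _ => False
  | _, .equal t₁ t₂, v, xs => t₁.realize (Sum.elim v xs) = t₂.realize (Sum.elim v xs)
  | _, .rel R ts, v, xs => RelMap R fun i => (ts i).realize (Sum.elim v xs)
  | _, .and φ ψ, v, xs => φ.Realize v xs ∧ ψ.Realize v xs
  | _, .or φ ψ, v, xs => φ.Realize v xs ∨ ψ.Realize v xs
  | _, .ex φ, v, xs => ∃ a, φ.Realize v (Fin.snoc xs a)

/-- Positive sentences. -/
abbrev PosSentence (L : FirstOrder.Language.{u, v}) : Type (max u v) := PosFormula L Empty 0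

/-- A positive sentence holds in a structure. -/
def PosSentence.Realize (M : Type w) [L.Structure M] (φ : PosSentence L) : Prop :=
  PosFormula.Realize (M := M) φ Empty.elim (fun i => i.elim0)

/-- Two structures are positively equivalent when they satisfy the same positive sentences. -/
def PosEquivalent (M : Type w) (N : Type x) [L.Structure M] [L.Structure N] : Prop :=
  ∀ φ : PosSentence L, PosSentence.Realize M φ ↔ PosSentence.Realize N φ

/-- A filter over a poset: a nonempty collection of upsets, upward closed among upsets and
closed under binary intersections. -/
structure PosetFilter (X : Type x) [Preorder X] where
  sets : Set (Set X)
  upper' : ∀ V ∈ sets, IsUpperSet V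
  nonempty' : sets.Nonempty
  mono' : ∀ V ∈ sets, ∀ W : Set X, IsUpperSet W → V ⊆ W → W ∈ sets
  inter' : ∀ V ∈ sets, ∀ W ∈ sets, V ∩ W ∈ sets

/-- A prime filter over a poset. -/
def PosetFilter.Prime {X : Type x} [Preorder X] (F : PosetFilter X) : Prop :=
  ∅ ∉ F.sets ∧ ∀ V W : Set X, IsUpperSet V → IsUpperSet W →
    V ∪ W ∈ F.sets → V ∈ F.sets ∨ W ∈ F.sets

/-- Predicate version: `S` is a filter over the poset `X`. -/
def IsPosetFilter {X : Type x} [Preorder X] (S : Set (Set X)) : Prop :=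
  (∀ V ∈ S, IsUpperSet V) ∧ S.Nonempty ∧
    (∀ V ∈ S, ∀ W : Set X, IsUpperSet W → V ⊆ W → W ∈ S) ∧
    (∀ V ∈ S, ∀ W ∈ S, V ∩ W ∈ S)

/-- Predicate version: `S` is a prime filter over the poset `X`. -/
def IsPrimePosetFilter {X : Type x} [Preorder X] (S : Set (Set X)) : Prop :=
  IsPosetFilter S ∧ ∅ ∉ S ∧ ∀ V W : Set X, IsUpperSet V → IsUpperSet W →
    V ∪ W ∈ S → V ∈ S ∨ W ∈ S

/-- A wellfounded forest: a poset whose principal downsets are well ordered. -/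
def IsWellFoundedForest (X : Type x) [Preorder X] : Prop :=
  ∀ a : X, IsWellOrder (Set.Iic a) (· < ·)

/-- An ordered system of structures indexed by a poset. -/
structure OrderedSystem (L : FirstOrder.Language.{u, v}) (X : Type x) [Preorder X]
    (M : X → Type w) [∀ a, L.Structure (M a)] where
  hom : ∀ ⦃a b : X⦄, a ≤ b → M a →[L] M b
  hom_id : ∀ (a : X) (m : M a), hom (le_refl a) m = m
  hom_comp : ∀ ⦃a b c : X⦄ (hab : a ≤ b) (hbc : b ≤ c) (m : M a),
    hom hbc (hom hab m) = hom (hab.trans hbc) m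

variable {X : Type x} [PartialOrder X] {M : X → Type w} [∀ a, L.Structure (M a)]

/-- A compatible family in `S_F`: an element of `S_V` for some `V ∈ F`. -/
structure CompFam (D : OrderedSystem L X M) (F : PosetFilter X) where
  dom : Set X
  dom_mem : dom ∈ F.sets
  val : ∀ a ∈ dom, M a
  compat : ∀ ⦃b c : X⦄ (hb : b ∈ dom) (hc : c ∈ dom) (hbc : b ≤ c),
    D.hom hbc (val b hb) = val c hc

variable {D : OrderedSystem L X M} {F : PosetFilter X}

/-- The set `⟦a = b⟧`. -/
def eqSet (a b : CompFam D F) : Set X :=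
  {p | ∃ (ha : p ∈ a.dom) (hb : p ∈ b.dom), a.val p ha = b.val p hb}

theorem eqSet_upper (a b : CompFam D F) : IsUpperSet (eqSet a b) := by
  rintro p q hpq ⟨ha, hb, he⟩
  have hap := F.upper' _ a.dom_mem hpq ha
  have hbp := F.upper' _ b.dom_mem hpq hb
  exact ⟨hap, hbp, by rw [← a.compat ha hap hpq, ← b.compat hb hbp hpq, he]⟩

/-- The relation `≡_F`. -/
instance CompFam.setoid (D : OrderedSystem L X M) (F : PosetFilter X) :
    Setoid (CompFam D F) where
  r a b := eqSet a b ∈ F.sets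
  iseqv := by
    constructor
    · intro a
      exact F.mono' _ a.dom_mem _ (eqSet_upper a a) (fun p hp => ⟨hp, hp, rfl⟩)
    · intro a b h
      refine F.mono' _ h _ (eqSet_upper b a) ?_
      rintro p ⟨ha, hb, he⟩
      exact ⟨hb, ha, he.symm⟩
    · intro a b c hab hbc
      refine F.mono' _ (F.inter' _ hab _ hbc) _ (eqSet_upper a c) ?_
      rintro p ⟨⟨ha, hb, h1⟩, hb', hc, h2⟩
      exact ⟨ha, hc, h1.trans h2⟩

theorem PosetFilter.univ_mem (F : PosetFilter X) : Set.univ ∈ F.sets := by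
  obtain ⟨V, hV⟩ := F.nonempty'
  exact F.mono' _ hV _ isUpperSet_univ (Set.subset_univ V)

theorem PosetFilter.iInter_mem (F : PosetFilter X) :
    ∀ {n : ℕ} (s : Fin n → Set X), (∀ i, s i ∈ F.sets) → (⋂ i, s i) ∈ F.sets := by
  intro n
  induction n with
  | zero =>
    intro s _
    rw [Set.iInter_of_empty]
    exact F.univ_mem
  | succ k ih =>
    intro s hs
    have he : (⋂ i, s i) = s 0 ∩ ⋂ i : Fin k, s i.succ := by
      ext p
      simp only [Set.mem_iInter, Set.mem_inter_iff, Fin.forall_fin_succ]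
    rw [he]
    exact F.inter' _ (hs 0) _ (ih _ fun i => hs i.succ)

/-- Pointwise application of a function symbol to compatible families. -/
def CompFam.app {n : ℕ} (g : L.Functions n) (a : Fin n → CompFam D F) : CompFam D F where
  dom := ⋂ i, (a i).dom
  dom_mem := F.iInter_mem _ fun i => (a i).dom_mem
  val p hp := funMap g fun i => (a i).val p (Set.mem_iInter.1 hp i)
  compat := by
    intro b c hb hc hbc
    rw [Hom.map_fun]
    congr 1
    funext i
    exact (a i).compat _ _ hbc

/-- The set `⟦R(a₁, …, aₙ)⟧`. -/
def relSet {n : ℕ} (R : L.Relations n) (a : Fin n → CompFam D F) : Set X :=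
  {p | ∃ h : ∀ i, p ∈ (a i).dom, RelMap R fun i => (a i).val p (h i)}

/-- The set `⟦φ(a₁, …, aₙ)⟧` for a positive formula `φ`. -/
def posSet {n : ℕ} (φ : PosFormula L Empty n) (a : Fin n → CompFam D F) : Set X :=
  {p | ∃ h : ∀ i, p ∈ (a i).dom,
    PosFormula.Realize φ Empty.elim fun i => (a i).val p (h i)}

/-- The filter product of an ordered system with respect to a filter over the index poset. -/
def FilterProd (D : OrderedSystem L X M) (F : PosetFilter X) : Type (max x w) :=
  Quotient (CompFam.setoid D F)

noncomputable instance FilterProd.structure : L.Structure (FilterProd D F) where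
  funMap {n} g v :=
    Quotient.mk (CompFam.setoid D F) (CompFam.app g fun i => (v i).out)
  RelMap {n} R v :=
    ∃ a : Fin n → CompFam D F,
      (∀ i, Quotient.mk (CompFam.setoid D F) (a i) = v i) ∧ relSet R a ∈ F.sets

/-- `(N, g)` is a direct limit (colimit) cocone of the ordered system `D`. -/
structure IsDirectLimitCocone {X : Type x} [Preorder X] {M : X → Type w}
    [∀ a, L.Structure (M a)] (D : OrderedSystem L X M)
    (N : Type z) [L.Structure N] (g : ∀ a, M a →[L] N) : Prop where
  compat : ∀ ⦃a b : X⦄ (hab : a ≤ b) (m : M a), g b (D.hom hab m) = g a m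
  universal : ∀ (P : Type (max x w z)) [L.Structure P] (h : ∀ a, M a →[L] P),
    (∀ ⦃a b : X⦄ (hab : a ≤ b) (m : M a), h b (D.hom hab m) = h a m) →
    ∃! k : N →[L] P, ∀ (a : X) (m : M a), k (g a m) = h a m

/-- A chain of structures: an ordered system indexed by a nonempty well ordered poset. -/
structure ChainSystem (L : FirstOrder.Language.{u, v}) where
  X : Type w
  [lo : LinearOrder X]
  [ne : Nonempty X]
  wf : WellFoundedLT X
  Mi : X → Type w
  [str : ∀ a, L.Structure (Mi a)]
  sys : OrderedSystem L X Mi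

attribute [instance] ChainSystem.lo ChainSystem.ne ChainSystem.str

/-- An ordered system indexed by a wellfounded forest, together with a prime filter. -/
structure PrimeSystem (L : FirstOrder.Language.{u, v}) where
  X : Type w
  [po : PartialOrder X]
  forest : IsWellFoundedForest X
  Mi : X → Type w
  [str : ∀ a, L.Structure (Mi a)]
  sys : OrderedSystem L X Mi
  F : PosetFilter X
  prime : F.Prime

attribute [instance] PrimeSystem.po PrimeSystem.str

/-- The ultrapower `M^ι/u`. -/
def Ultrapower (M : Type w) (ι : Type z) (u : Ultrafilter ι) :
    Type (max w z) :=
  (↑u : Filter ι).Product fun _ => M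

noncomputable instance Ultrapower.structure (M : Type w) [L.Structure M] (ι : Type z)
    (u : Ultrafilter ι) : L.Structure (Ultrapower M ι u) :=
  inferInstanceAs (L.Structure ((↑u : Filter ι).Product fun _ => M))

/-- A prime power of the structure `N`: a prime product of an ordered system
all of whose structures are `N`. -/
structure PrimePowerOf (L : FirstOrder.Language.{u, v}) (N : Type w) [L.Structure N] where
  X : Type x
  [po : PartialOrder X]
  forest : IsWellFoundedForest X
  sys : OrderedSystem L X fun _ => N
  F : PosetFilter X
  prime : F.Prime

attribute [instance] PrimePowerOf.po

/-- The carrier of a prime power. -/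
def PrimePowerOf.carrier {N : Type w} [L.Structure N] (p : PrimePowerOf L N) :
    Type (max x w) :=
  FilterProd p.sys p.F

noncomputable instance {N : Type w} [L.Structure N] (p : PrimePowerOf L N) :
    L.Structure p.carrier :=
  inferInstanceAs (L.Structure (FilterProd p.sys p.F))

/-- Basic h-inductive sentences: universal closures of implications between
positive formulas. -/
structure BasicHInd (L : FirstOrder.Language.{u, v}) : Type (max u v) where
  n : ℕ
  lhs : PosFormula L Empty n
  rhs : PosFormula L Empty n

/-- Satisfaction of a basic h-inductive sentence. -/
def BasicHInd.Realize (φ : BasicHInd L) (M : Type w) [L.Structure M] : Prop :=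
  ∀ xs : Fin φ.n → M, φ.lhs.Realize Empty.elim xs → φ.rhs.Realize Empty.elim xs

/-- Satisfaction of an h-inductive theory (a set of h-inductive sentences). -/
def ModelsHInd (M : Type w) [L.Structure M] (T : Set (BasicHInd L)) : Prop :=
  ∀ φ ∈ T, φ.Realize M

/-- An immersion: a map preserving and reflecting all positive formulas. -/
def IsImmersion {M : Type w} {N : Type x} [L.Structure M] [L.Structure N]
    (f : N → M) : Prop :=
  ∀ {n : ℕ} (φ : PosFormula L Empty n) (xs : Fin n → N),
    PosFormula.Realize φ Empty.elim xs ↔ PosFormula.Realize φ Empty.elim (f ∘ xs)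

/-- A positively existentially closed model of an h-inductive theory `T`. -/
def IsPec (T : Set (BasicHInd L)) (M : Type w) [L.Structure M] : Prop :=
  ModelsHInd M T ∧ ∀ (P : Type w) [L.Structure P], ModelsHInd P T →
    ∀ f : M →[L] P, IsImmersion (L := L) (⇑f : M → P)

/-- Positive `κ`-saturation. -/
def PositivelySaturatedAt (M : Type w) [L.Structure M] (κ : Cardinal.{w}) : Prop :=
  ∀ (γ : Type w) (vp : γ → M), Cardinal.mk γ < κ →
    ∀ (n : ℕ) (p : Set (PosFormula L γ n)),
      (∀ s : Finset (PosFormula L γ n), ↑s ⊆ p →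
        ∃ xs : Fin n → M, ∀ φ ∈ s, PosFormula.Realize φ vp xs) →
      ∃ xs : Fin n → M, ∀ φ ∈ p, PosFormula.Realize φ vp xs

/-- Positive saturation: positive `|M|`-saturation. -/
def PositivelySaturated (M : Type w) [L.Structure M] : Prop :=
  PositivelySaturatedAt (L := L) M (Cardinal.mk M)



section Stmt7Aux

variable {Y : Type x} [LinearOrder Y] {Mi : Y → Type w} [∀ a, L.Structure (Mi a)]
  {DD : OrderedSystem L Y Mi} {FF : PosetFilter Y}

/-- The filter of principal upsets on a nonempty well ordered linear order. -/
def principalFilter (Y : Type x) [LinearOrder Y] [Nonempty Y] (hwf : WellFoundedLT Y) :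
    PosetFilter Y where
  sets := {V : Set Y | ∃ a : Y, V = Set.Ici a}
  upper' := by rintro V ⟨a, rfl⟩; exact isUpperSet_Ici a
  nonempty' := ⟨Set.Ici (Classical.arbitrary Y), ⟨_, rfl⟩⟩
  mono' := by
    rintro V ⟨a, rfl⟩ W hW hVW
    have hne : W.Nonempty := ⟨a, hVW Set.self_mem_Ici⟩
    refine ⟨hwf.wf.min W hne, ?_⟩
    ext q
    constructor
    · intro hq
      exact not_lt.1 (hwf.wf.not_lt_min W hq)
    · intro hq
      exact hW hq (hwf.wf.min_mem W hne)
  inter' := by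
    rintro V ⟨a, rfl⟩ W ⟨b, rfl⟩
    exact ⟨a ⊔ b, Set.Ici_inter_Ici⟩

theorem principalFilter_prime (Y : Type x) [LinearOrder Y] [Nonempty Y]
    (hwf : WellFoundedLT Y) : (principalFilter Y hwf).Prime := by
  constructor
  · rintro ⟨a, ha⟩
    exact (Set.nonempty_Ici (a := a)).ne_empty ha.symm
  · rintro V W hV hW ⟨r, hr⟩
    have hrV : r ∈ V ∪ W := hr ▸ Set.self_mem_Ici
    cases hrV with
    | inl h =>
      exact Or.inl ⟨r, Set.Subset.antisymm (hr ▸ Set.subset_union_left)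
        (fun q hq => hV hq h)⟩
    | inr h =>
      exact Or.inr ⟨r, Set.Subset.antisymm (hr ▸ Set.subset_union_right)
        (fun q hq => hW hq h)⟩

theorem app_congr {n : ℕ} (f : L.Functions n) {a b : Fin n → CompFam DD FF}
    (h : ∀ i, a i ≈ b i) : CompFam.app f a ≈ CompFam.app f b := by
  refine FF.mono' _ (FF.iInter_mem (fun i => eqSet (a i) (b i)) h) _
    (eqSet_upper _ _) ?_
  intro p hp
  have hp' : ∀ i, p ∈ eqSet (a i) (b i) := Set.mem_iInter.1 hp
  refine ⟨Set.mem_iInter.2 fun i => ((hp' i).choose), Set.mem_iInter.2 fun i =>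
    ((hp' i).choose_spec.choose), ?_⟩
  show funMap f _ = funMap f _
  congr 1
  funext i
  exact (hp' i).choose_spec.choose_spec

theorem funMap_mk {n : ℕ} (f : L.Functions n) (v : Fin n → CompFam DD FF) :
    (funMap (M := FilterProd DD FF) f (fun i => ⟦v i⟧)) = ⟦CompFam.app f v⟧ := by
  show Quotient.mk _ _ = _
  exact Quotient.sound (app_congr f fun i => Quotient.exact (Quotient.out_eq _))

theorem relSet_upper {n : ℕ} (R : L.Relations n) (a : Fin n → CompFam DD FF) :
    IsUpperSet (relSet R a) := by
  rintro p q hpq ⟨h, hR⟩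
  have h' : ∀ i, q ∈ (a i).dom := fun i => FF.upper' _ (a i).dom_mem hpq (h i)
  refine ⟨h', ?_⟩
  have he : (fun i => (a i).val q (h' i)) = fun i => DD.hom hpq ((a i).val p (h i)) := by
    funext i; exact ((a i).compat _ _ hpq).symm
  rw [he]
  exact (DD.hom hpq).map_rel R _ hR

/-- The canonical compatible family generated by an element of `Mi a`. -/
def famOf (DD : OrderedSystem L Y Mi) (FF : PosetFilter Y)
    (hF : ∀ a : Y, Set.Ici a ∈ FF.sets) (a : Y) (m : Mi a) : CompFam DD FF where
  dom := Set.Ici a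
  dom_mem := hF a
  val p hp := DD.hom hp m
  compat := fun b c hb _hc hbc => DD.hom_comp hb hbc m

/-- The canonical homomorphism into the filter product. -/
def toProdHom (hF : ∀ a : Y, Set.Ici a ∈ FF.sets) (a : Y) :
    Mi a →[L] FilterProd DD FF where
  toFun m := ⟦famOf DD FF hF a m⟧
  map_fun' := by
    intro n f x
    show (⟦famOf DD FF hF a (funMap f x)⟧ : FilterProd DD FF)
      = funMap (M := FilterProd DD FF) f fun i => ⟦famOf DD FF hF a (x i)⟧
    rw [funMap_mk]
    refine Quotient.sound (FF.mono' _ (hF a) _ (eqSet_upper _ _) ?_)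
    intro p hp
    refine ⟨hp, Set.mem_iInter.2 fun i => hp, ?_⟩
    show DD.hom hp (funMap f x) = funMap f _
    rw [(DD.hom hp).map_fun]
    rfl
  map_rel' := by
    intro n r x h
    refine ⟨fun i => famOf DD FF hF a (x i), fun i => rfl,
      FF.mono' _ (hF a) _ (relSet_upper _ _) ?_⟩
    intro p hp
    refine ⟨fun i => hp, ?_⟩
    exact (DD.hom hp).map_rel r x h

theorem toProdHom_compat (hF : ∀ a : Y, Set.Ici a ∈ FF.sets) {a b : Y} (hab : a ≤ b)
    (m : Mi a) : toProdHom (DD := DD) hF b (DD.hom hab m) = toProdHom hF a m := by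
  refine Quotient.sound (FF.mono' _ (hF b) _ (eqSet_upper _ _) ?_)
  intro p hp
  exact ⟨hp, le_trans hab hp, DD.hom_comp hab hp m⟩

section ToLim

variable (hF' : ∀ V ∈ FF.sets, ∃ a : Y, V = Set.Ici a)
  {N : Type z} [L.Structure N] (g : ∀ a, Mi a →[L] N)

/-- A point in the domain of a compatible family. -/
noncomputable def domPt (c : CompFam DD FF) : Y := (hF' c.dom c.dom_mem).choose

theorem domPt_mem (c : CompFam DD FF) : domPt hF' c ∈ c.dom := by
  have h := (hF' c.dom c.dom_mem).choose_spec
  rw [h]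
  exact Set.self_mem_Ici

theorem ell_const
    (hg : ∀ ⦃a b : Y⦄ (hab : a ≤ b) (m : Mi a), g b (DD.hom hab m) = g a m)
    (c : CompFam DD FF) {p q : Y} (hp : p ∈ c.dom) (hq : q ∈ c.dom) :
    g p (c.val p hp) = g q (c.val q hq) := by
  rcases le_total p q with h | h
  · conv_rhs => rw [← c.compat hp hq h]
    rw [hg h]
  · conv_lhs => rw [← c.compat hq hp h]
    rw [hg h]

/-- The evaluation of a compatible family in the colimit. -/
noncomputable def ellAux (c : CompFam DD FF) : N :=
  g (domPt hF' c) (c.val _ (domPt_mem hF' c))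

/-- The underlying function of the homomorphism from the filter product to the colimit. -/
noncomputable def ell
    (hg : ∀ ⦃a b : Y⦄ (hab : a ≤ b) (m : Mi a), g b (DD.hom hab m) = g a m) :
    FilterProd DD FF → N :=
  Quotient.lift (ellAux hF' g) (by
    intro a b hab
    obtain ⟨r, hr⟩ := hF' _ hab
    have hrmem : r ∈ eqSet a b := hr ▸ Set.self_mem_Ici
    obtain ⟨ha, hb, he⟩ := hrmem
    unfold ellAux
    rw [ell_const g hg a (domPt_mem hF' a) ha, ell_const g hg b (domPt_mem hF' b) hb, he])

theorem ell_mk (hg : ∀ ⦃a b : Y⦄ (hab : a ≤ b) (m : Mi a), g b (DD.hom hab m) = g a m)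
    (c : CompFam DD FF) : ell hF' g hg ⟦c⟧ = ellAux hF' g c := rfl

/-- The homomorphism from the filter product to the colimit. -/
noncomputable def prodToLim
    (hg : ∀ ⦃a b : Y⦄ (hab : a ≤ b) (m : Mi a), g b (DD.hom hab m) = g a m) :
    FilterProd DD FF →[L] N where
  toFun := ell hF' g hg
  map_fun' := by
    intro n f v
    have hv : ∀ i, (⟦(v i).out⟧ : FilterProd DD FF) = v i := fun i => Quotient.out_eq _
    have h1 : funMap f v = (⟦CompFam.app f fun i => (v i).out⟧ : FilterProd DD FF) := rfl
    rw [h1, ell_mk]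
    set c : Fin n → CompFam DD FF := fun i => (v i).out with hc
    set A := CompFam.app f c with hA
    have hpdom : ∀ i, domPt hF' A ∈ (c i).dom :=
      fun i => Set.mem_iInter.1 (domPt_mem hF' A) i
    show g (domPt hF' A) (funMap f fun i => (c i).val _ (hpdom i)) = _
    rw [(g (domPt hF' A)).map_fun]
    congr 1
    funext i
    show g (domPt hF' A) ((c i).val _ (hpdom i)) = ell hF' g hg (v i)
    rw [← hv i, ell_mk]
    exact ell_const g hg (c i) (hpdom i) (domPt_mem hF' (c i))
  map_rel' := by
    intro n r v h
    obtain ⟨c, hc, hrel⟩ := h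
    obtain ⟨s, hs⟩ := hF' _ hrel
    have hsmem : s ∈ relSet r c := hs ▸ Set.self_mem_Ici
    obtain ⟨hdom, hR⟩ := hsmem
    have he : ell hF' g hg ∘ v = fun i => g s ((c i).val s (hdom i)) := by
      funext i
      show ell hF' g hg (v i) = _
      rw [← hc i, ell_mk]
      exact ell_const g hg (c i) (domPt_mem hF' (c i)) (hdom i)
    show RelMap r (ell hF' g hg ∘ v)
    rw [he]
    exact (g s).map_rel r _ hR

theorem prodToLim_toProdHom
    (hg : ∀ ⦃a b : Y⦄ (hab : a ≤ b) (m : Mi a), g b (DD.hom hab m) = g a m)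
    (hF : ∀ a : Y, Set.Ici a ∈ FF.sets) (a : Y) (m : Mi a) :
    prodToLim hF' g hg (toProdHom (DD := DD) hF a m) = g a m := by
  show ellAux hF' g (famOf DD FF hF a m) = g a m
  unfold ellAux
  rw [ell_const g hg _ (domPt_mem hF' _) (Set.self_mem_Ici : a ∈ (famOf DD FF hF a m).dom)]
  show g a (DD.hom (le_refl a) m) = g a m
  rw [DD.hom_id]

end ToLim

/-- `L`-structure on `ULift`. -/
instance uliftStructure (P : Type z) [L.Structure P] : L.Structure (ULift.{y} P) where
  funMap f x := ULift.up (funMap f fun i => (x i).down)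
  RelMap r x := RelMap r fun i => (x i).down

/-- `ULift.up` as a homomorphism. -/
def upHom (P : Type z) [L.Structure P] : P →[L] ULift.{y} P where
  toFun := ULift.up
  map_fun' := fun _ _ => rfl
  map_rel' := fun _ _ h => h

/-- `ULift.down` as a homomorphism. -/
def downHom (P : Type z) [L.Structure P] : ULift.{y} P →[L] P where
  toFun := ULift.down
  map_fun' := fun _ _ => rfl
  map_rel' := fun _ _ h => h

end Stmt7Aux

/-- The direct limit of a chain of structures indexed by a nonempty well ordered poset is
isomorphic to the prime product with respect to the prime filter of principal upsets. -/
theorem stmt7 {Y : Type x} [LinearOrder Y] [Nonempty Y] (hwf : WellFoundedLT Y)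
    {Mi : Y → Type w} [∀ a, L.Structure (Mi a)] (D : OrderedSystem L Y Mi)
    (N : Type z) [L.Structure N] (g : ∀ a, Mi a →[L] N)
    (hN : IsDirectLimitCocone D N g) :
    ∃ F : PosetFilter Y, F.sets = {V : Set Y | ∃ a : Y, V = Set.Ici a} ∧ F.Prime ∧
      Nonempty (N ≃[L] FilterProd D F) := by
  classical
  refine ⟨principalFilter Y hwf, rfl, principalFilter_prime Y hwf, ?_⟩
  set F : PosetFilter Y := principalFilter Y hwf with hFdef
  have hF : ∀ a : Y, Set.Ici a ∈ F.sets := fun a => ⟨a, rfl⟩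
  have hF' : ∀ V ∈ F.sets, ∃ a : Y, V = Set.Ici a := fun V hV => hV
  -- the homomorphism from the filter product to `N`
  let ℓ : FilterProd D F →[L] N := prodToLim hF' g hN.compat
  have hℓh : ∀ (a : Y) (m : Mi a), ℓ (toProdHom (DD := D) hF a m) = g a m :=
    fun a m => prodToLim_toProdHom hF' g hN.compat hF a m
  -- the homomorphism from `N` to the filter product, via the universal property
  obtain ⟨k, hk, -⟩ := hN.universal (ULift.{z} (FilterProd D F))
    (fun a => (upHom (FilterProd D F)).comp (toProdHom hF a))
    (fun a b hab m => congrArg ULift.up (toProdHom_compat hF hab m))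
  let kk : N →[L] FilterProd D F := ((downHom (FilterProd D F) : ULift.{z} (FilterProd D F) →[L] FilterProd D F)).comp k
  have hkk : ∀ (a : Y) (m : Mi a), kk (g a m) = toProdHom (DD := D) hF a m := by
    intro a m
    show (k (g a m)).down = _
    rw [hk a m]
    rfl
  -- left inverse: `ℓ ∘ kk = id` by uniqueness
  have hleft : ∀ x : N, ℓ (kk x) = x := by
    obtain ⟨k₀, -, huniq⟩ := hN.universal (ULift.{max x w} N)
      (fun a => (upHom N).comp (g a))
      (fun a b hab m => congrArg ULift.up (hN.compat hab m))
    have h1 : (upHom N).comp (ℓ.comp kk) = k₀ := by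
      refine huniq _ ?_
      intro a m
      show ULift.up (ℓ (kk (g a m))) = ULift.up (g a m)
      rw [hkk a m, hℓh a m]
    have h2 : (upHom N) = k₀ := huniq _ (fun a m => rfl)
    intro x
    have := DFunLike.congr_fun (h1.trans h2.symm) x
    exact congrArg ULift.down this
  -- right inverse: `kk ∘ ℓ = id`
  have hright : ∀ q : FilterProd D F, kk (ℓ q) = q := by
    intro q
    induction q using Quotient.inductionOn with
    | h c =>
      have h1 : ℓ ⟦c⟧ = g (domPt hF' c) (c.val _ (domPt_mem hF' c)) := rfl
      rw [h1, hkk]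
      refine Quotient.sound (F.mono' _ (hF (domPt hF' c)) _ (eqSet_upper _ _) ?_)
      intro p hp
      exact ⟨hp, F.upper' _ c.dom_mem hp (domPt_mem hF' c), c.compat _ _ hp⟩
  refine ⟨⟨⟨kk, ℓ, hleft, hright⟩, ?_, ?_⟩⟩
  · intro n f v
    exact kk.map_fun f v
  · intro n r v
    constructor
    · intro h
      have h2 : RelMap r (⇑kk ∘ v) := h
      have h3 := ℓ.map_rel r _ h2
      have he : ⇑ℓ ∘ ⇑kk ∘ v = v := funext fun i => hleft (v i)
      rwa [he] at h3
    · intro h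
      exact kk.map_rel r v h

end PosLogic
end

section
/- (Positive Łoś Theorem) Let ∏_{x∈X} M_x / F be a prime product over a wellfounded forest X. For every positive formula φ(v₁,…,vₙ) and all a₁,…,aₙ ∈ S_F, the prime product satisfies φ(a₁/≡_F, …, aₙ/≡_F) if and only if ⟦φ(a₁,…,aₙ)⟧ ∈ F. -/
namespace PosLogic

open FirstOrder FirstOrder.Language FirstOrder.Language.Structure Set

universe u v w x y z

variable {L : FirstOrder.Language.{u, v}}

variable {α : Type y}

variable {X : Type x} [PartialOrder X] {M : X → Type w} [∀ a, L.Structure (M a)]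

variable {D : OrderedSystem L X M} {F : PosetFilter X}

/-! ### Auxiliary lemmas for the positive Łoś theorem -/

/-- Homomorphisms preserve positive formulas. -/
theorem PosFormula.realize_map {P : Type z} {Q : Type w} [L.Structure P] [L.Structure Q]
    (f : P →[L] Q) {n : ℕ} (φ : PosFormula L α n) (v : α → P) (xs : Fin n → P)
    (h : φ.Realize v xs) : φ.Realize (f ∘ v) (f ∘ xs) := by
  induction φ with
  | falsum => exact h
  | equal t₁ t₂ =>
    simp only [PosFormula.Realize, ← Sum.comp_elim, HomClass.realize_term] at h ⊢
    exact congrArg f h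
  | rel R ts =>
    simp only [PosFormula.Realize, ← Sum.comp_elim, HomClass.realize_term] at h ⊢
    exact f.map_rel R _ h
  | and φ ψ ihφ ihψ => exact ⟨ihφ _ h.1, ihψ _ h.2⟩
  | or φ ψ ihφ ihψ => exact h.elim (fun h => Or.inl (ihφ _ h)) (fun h => Or.inr (ihψ _ h))
  | ex φ ih =>
    rename_i k
    obtain ⟨m, hm⟩ := h
    refine ⟨f m, ?_⟩
    rw [← Fin.comp_snoc]
    exact ih _ hm

theorem posSet_upper {n : ℕ} (φ : PosFormula L Empty n) (a : Fin n → CompFam D F) :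
    IsUpperSet (posSet φ a) := by
  rintro p q hpq ⟨h, hr⟩
  refine ⟨fun i => F.upper' _ (a i).dom_mem hpq (h i), ?_⟩
  have hmap := PosFormula.realize_map (D.hom hpq) φ Empty.elim _ hr
  have e1 : (D.hom hpq) ∘ (Empty.elim : Empty → M p) = Empty.elim := funext fun e => e.elim
  have e2 : (D.hom hpq) ∘ (fun i => (a i).val p (h i)) =
      fun i => (a i).val q (F.upper' _ (a i).dom_mem hpq (h i)) :=
    funext fun i => (a i).compat _ _ hpq
  rwa [e1, e2] at hmap

/-- The compatible family obtained by pointwise evaluation of a term. -/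
def termFam {n : ℕ} (t : L.Term (Empty ⊕ Fin n)) (a : Fin n → CompFam D F) : CompFam D F where
  dom := ⋂ i, (a i).dom
  dom_mem := F.iInter_mem _ fun i => (a i).dom_mem
  val p hp := t.realize (Sum.elim Empty.elim fun i => (a i).val p (Set.mem_iInter.1 hp i))
  compat := by
    intro b c hb hc hbc
    rw [← HomClass.realize_term (g := D.hom hbc)]
    congr 1
    funext s
    cases s with
    | inl e => exact e.elim
    | inr i => exact (a i).compat _ _ hbc

theorem app_congr_s9 {l : ℕ} (g : L.Functions l) (b c : Fin l → CompFam D F)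
    (h : ∀ i, eqSet (b i) (c i) ∈ F.sets) :
    eqSet (CompFam.app g b) (CompFam.app g c) ∈ F.sets := by
  refine F.mono' _ (F.iInter_mem _ fun i => h i) _ (eqSet_upper _ _) ?_
  intro p hp
  have key : ∀ i : Fin l, ∃ (hb : p ∈ (b i).dom) (hc : p ∈ (c i).dom),
      (b i).val p hb = (c i).val p hc := fun i => Set.mem_iInter.1 hp i
  refine ⟨Set.mem_iInter.2 fun i => (key i).choose,
    Set.mem_iInter.2 fun i => (key i).choose_spec.choose, ?_⟩
  show funMap g _ = funMap g _
  congr 1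
  funext i
  exact (key i).choose_spec.choose_spec

theorem app_termFam {l n : ℕ} (g : L.Functions l) (ts : Fin l → L.Term (Empty ⊕ Fin n))
    (a : Fin n → CompFam D F) :
    eqSet (CompFam.app g fun i => termFam (ts i) a) (termFam (Term.func g ts) a) ∈ F.sets := by
  refine F.mono' _ (F.iInter_mem _ fun j => (a j).dom_mem) _ (eqSet_upper _ _) ?_
  intro p hp
  exact ⟨Set.mem_iInter.2 fun i => hp, hp, rfl⟩

theorem out_equiv (b : CompFam D F) :
    eqSet (Quotient.mk (CompFam.setoid D F) b).out b ∈ F.sets := by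
  have h : (Quotient.mk (CompFam.setoid D F) b).out ≈ b :=
    Quotient.exact (Quotient.out_eq (Quotient.mk (CompFam.setoid D F) b))
  exact h

theorem realize_term_eq {n : ℕ} (t : L.Term (Empty ⊕ Fin n)) (a : Fin n → CompFam D F) :
    Term.realize (M := FilterProd D F)
        (Sum.elim Empty.elim fun i => Quotient.mk (CompFam.setoid D F) (a i)) t =
      Quotient.mk (CompFam.setoid D F) (termFam t a) := by
  induction t with
  | var s =>
    cases s with
    | inl e => exact e.elim
    | inr i =>
      apply Quotient.sound
      show eqSet (a i) (termFam (Term.var (Sum.inr i)) a) ∈ F.sets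
      refine F.mono' _ (F.iInter_mem _ fun j => (a j).dom_mem) _ (eqSet_upper _ _) ?_
      intro p hp
      exact ⟨Set.mem_iInter.1 hp i, hp, rfl⟩
  | func g ts ih =>
    simp only [Term.realize, ih]
    exact Quotient.sound (Setoid.trans
      (app_congr_s9 g _ _ fun i => out_equiv (termFam (ts i) a))
      (app_termFam g ts a))

theorem relSet_upper_s9 {l : ℕ} (R : L.Relations l) (c : Fin l → CompFam D F) :
    IsUpperSet (relSet R c) := by
  rintro p q hpq ⟨h, hr⟩
  refine ⟨fun i => F.upper' _ (c i).dom_mem hpq (h i), ?_⟩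
  have hmap := (D.hom hpq).map_rel R _ hr
  have e : (D.hom hpq) ∘ (fun i => (c i).val p (h i)) =
      fun i => (c i).val q (F.upper' _ (c i).dom_mem hpq (h i)) :=
    funext fun i => (c i).compat _ _ hpq
  rwa [e] at hmap

theorem relMap_iff {l : ℕ} (R : L.Relations l) (c : Fin l → CompFam D F) :
    RelMap (M := FilterProd D F) R (fun i => Quotient.mk (CompFam.setoid D F) (c i)) ↔
      relSet R c ∈ F.sets := by
  constructor
  · rintro ⟨b, hb, hrel⟩
    have he : ∀ i, eqSet (b i) (c i) ∈ F.sets := fun i => Quotient.exact (hb i)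
    refine F.mono' _ (F.inter' _ hrel _ (F.iInter_mem _ he)) _ (relSet_upper_s9 R c) ?_
    rintro p ⟨⟨h, hr⟩, hi⟩
    have key : ∀ i : Fin l, ∃ (h1 : p ∈ (b i).dom) (h2 : p ∈ (c i).dom),
        (b i).val p h1 = (c i).val p h2 := fun i => Set.mem_iInter.1 hi i
    refine ⟨fun i => (key i).choose_spec.choose, ?_⟩
    have e : (fun i => (c i).val p ((key i).choose_spec.choose)) =
        fun i => (b i).val p (h i) :=
      funext fun i => ((key i).choose_spec.choose_spec).symm
    rw [e]
    exact hr
  · intro h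
    exact ⟨c, fun i => rfl, h⟩

/-- Values of a compatible family at equal families agree. -/
theorem val_congr {b c : CompFam D F} (h : b = c) {p : X} (hb : p ∈ b.dom) (hc : p ∈ c.dom) :
    b.val p hb = c.val p hc := by subst h; rfl

/-- The minimum point of `V ∩ Iic p` in a wellfounded forest. -/
noncomputable def minPt (hX : IsWellFoundedForest X) (V : Set X) (p : X) (hp : p ∈ V) : X :=
  ((hX p).toIsWellFounded.wf.min {x : Set.Iic p | (x : X) ∈ V}
    ⟨⟨p, le_refl p⟩, hp⟩ : Set.Iic p)

theorem minPt_mem (hX : IsWellFoundedForest X) (V : Set X) (p : X) (hp : p ∈ V) :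
    minPt hX V p hp ∈ V :=
  (hX p).toIsWellFounded.wf.min_mem {x : Set.Iic p | (x : X) ∈ V} ⟨⟨p, le_refl p⟩, hp⟩

theorem minPt_le (hX : IsWellFoundedForest X) (V : Set X) (p : X) (hp : p ∈ V) :
    minPt hX V p hp ≤ p :=
  ((hX p).toIsWellFounded.wf.min {x : Set.Iic p | (x : X) ∈ V} ⟨⟨p, le_refl p⟩, hp⟩).2

theorem minPt_min (hX : IsWellFoundedForest X) (V : Set X) (p : X) (hp : p ∈ V)
    {x : X} (hx : x ∈ V) (hxp : x ≤ p) : ¬ x < minPt hX V p hp := fun hlt =>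
  (hX p).toIsWellFounded.wf.not_lt_min {x : Set.Iic p | (x : X) ∈ V}
    (show ((⟨x, hxp⟩ : Set.Iic p) : X) ∈ V from hx) (Subtype.coe_lt_coe.1 hlt)

theorem minPt_eq (hX : IsWellFoundedForest X) (V : Set X) {p q : X} (hp : p ∈ V) (hq : q ∈ V)
    (hpq : p ≤ q) : minPt hX V p hp = minPt hX V q hq := by
  have h1 : minPt hX V p hp ≤ q := le_trans (minPt_le hX V p hp) hpq
  haveI := hX q
  rcases @trichotomous _ (· < ·) _ (⟨minPt hX V p hp, h1⟩ : Set.Iic q)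
      ⟨minPt hX V q hq, minPt_le hX V q hq⟩ with h | h | h
  · exact absurd (Subtype.mk_lt_mk.1 h)
      (minPt_min hX V q hq (minPt_mem hX V p hp) h1)
  · exact congrArg Subtype.val h
  · have hlt : minPt hX V q hq < minPt hX V p hp := Subtype.mk_lt_mk.1 h
    exact absurd hlt
      (minPt_min hX V p hp (minPt_mem hX V q hq) (le_trans hlt.le (minPt_le hX V p hp)))

theorem hom_congr_pt {V : Set X} (W : ∀ m, m ∈ V → M m)
    {m₁ m₂ p : X} (h : m₁ = m₂) (h₁ : m₁ ≤ p) (h₂ : m₂ ≤ p) (hm₁ : m₁ ∈ V) (hm₂ : m₂ ∈ V) :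
    D.hom h₁ (W m₁ hm₁) = D.hom h₂ (W m₂ hm₂) := by subst h; rfl


theorem snoc_fam_castSucc {k : ℕ} (a : Fin k → CompFam D F) (c : CompFam D F) (j : Fin k) :
    (Fin.snoc a c : Fin (k + 1) → CompFam D F) j.castSucc = a j := by simp

theorem snoc_fam_last {k : ℕ} (a : Fin k → CompFam D F) (c : CompFam D F) :
    (Fin.snoc a c : Fin (k + 1) → CompFam D F) (Fin.last k) = c := by simp

theorem mk_eq_iff (b c : CompFam D F) :
    Quotient.mk (CompFam.setoid D F) b = Quotient.mk (CompFam.setoid D F) c ↔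
      eqSet b c ∈ F.sets := by
  constructor
  · intro h
    have h2 : b ≈ c := Quotient.exact h
    exact h2
  · intro h
    exact Quotient.sound h

/-- The Positive Łoś Theorem: a prime product satisfies a positive formula at a tuple of
classes of compatible families if and only if `⟦φ(a₁,…,aₙ)⟧` belongs to the prime filter. -/
theorem positive_los (hX : IsWellFoundedForest X) (D : OrderedSystem L X M)
    (F : PosetFilter X) (hF : F.Prime) {n : ℕ} (φ : PosFormula L Empty n)
    (a : Fin n → CompFam D F) :
    PosFormula.Realize (M := FilterProd D F) φ Empty.elim
        (fun i => Quotient.mk (CompFam.setoid D F) (a i)) ↔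
      posSet φ a ∈ F.sets := by
  induction φ with
  | falsum =>
    simp only [PosFormula.Realize]
    constructor
    · exact False.elim
    · intro hmem
      have he : posSet (.falsum : PosFormula L Empty _) a = ∅ := by
        ext p
        simp [posSet, PosFormula.Realize]
      rw [he] at hmem
      exact hF.1 hmem
  | equal t₁ t₂ =>
    simp only [PosFormula.Realize]
    rw [realize_term_eq, realize_term_eq]
    refine (mk_eq_iff _ _).trans ?_
    constructor
    · intro h
      refine F.mono' _ h _ (posSet_upper _ _) ?_
      rintro p ⟨h1, h2, he⟩
      exact ⟨fun i => Set.mem_iInter.1 h1 i, he⟩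
    · intro h
      refine F.mono' _ h _ (eqSet_upper _ _) ?_
      rintro p ⟨hh, he⟩
      exact ⟨Set.mem_iInter.2 hh, Set.mem_iInter.2 hh, he⟩
  | rel R ts =>
    simp only [PosFormula.Realize, realize_term_eq]
    rw [relMap_iff]
    constructor
    · intro h
      refine F.mono' _ (F.inter' _ h _ (F.iInter_mem _ fun j => (a j).dom_mem)) _
        (posSet_upper _ _) ?_
      rintro p ⟨⟨h1, hr⟩, h2⟩
      exact ⟨fun j => Set.mem_iInter.1 h2 j, hr⟩
    · intro h
      refine F.mono' _ h _ (relSet_upper_s9 _ _) ?_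
      rintro p ⟨h1, hr⟩
      exact ⟨fun i => Set.mem_iInter.2 fun j => h1 j, hr⟩
  | and φ ψ ihφ ihψ =>
    simp only [PosFormula.Realize]
    rw [ihφ a, ihψ a]
    constructor
    · rintro ⟨h1, h2⟩
      refine F.mono' _ (F.inter' _ h1 _ h2) _ (posSet_upper _ _) ?_
      rintro p ⟨⟨ha, hr1⟩, hb, hr2⟩
      exact ⟨ha, hr1, hr2⟩
    · intro h
      exact ⟨F.mono' _ h _ (posSet_upper _ _) (fun p hp => ⟨hp.choose, hp.choose_spec.1⟩),
        F.mono' _ h _ (posSet_upper _ _) (fun p hp => ⟨hp.choose, hp.choose_spec.2⟩)⟩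
  | or φ ψ ihφ ihψ =>
    simp only [PosFormula.Realize]
    rw [ihφ a, ihψ a]
    constructor
    · rintro (h | h)
      · exact F.mono' _ h _ (posSet_upper _ _)
          (fun p hp => ⟨hp.choose, Or.inl hp.choose_spec⟩)
      · exact F.mono' _ h _ (posSet_upper _ _)
          (fun p hp => ⟨hp.choose, Or.inr hp.choose_spec⟩)
    · intro h
      have hsub : posSet (φ.or ψ) a ⊆ posSet φ a ∪ posSet ψ a := by
        rintro p ⟨hh, hr | hr⟩
        · exact Or.inl ⟨hh, hr⟩
        · exact Or.inr ⟨hh, hr⟩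
      exact hF.2 _ _ (posSet_upper φ a) (posSet_upper ψ a)
        (F.mono' _ h _ ((posSet_upper φ a).union (posSet_upper ψ a)) hsub)
  | ex φ ih =>
    rename_i k
    simp only [PosFormula.Realize]
    constructor
    · rintro ⟨m, hm⟩
      obtain ⟨c, rfl⟩ := Quotient.exists_rep m
      have hm' : PosFormula.Realize (M := FilterProd D F) φ Empty.elim
          (fun i => Quotient.mk (CompFam.setoid D F) ((Fin.snoc a c : Fin (k + 1) → CompFam D F) i)) := by
        rw [show (fun i => Quotient.mk (CompFam.setoid D F) ((Fin.snoc a c : Fin (k + 1) → CompFam D F) i)) =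
          Quotient.mk (CompFam.setoid D F) ∘ Fin.snoc a c from rfl, Fin.comp_snoc]
        exact hm
      have hmem := (ih (Fin.snoc a c)).1 hm'
      refine F.mono' _ hmem _ (posSet_upper _ _) ?_
      rintro p ⟨h, hr⟩
      have hdom : ∀ i : Fin k, p ∈ (a i).dom := fun i =>
        (snoc_fam_castSucc a c i) ▸ h i.castSucc
      refine ⟨hdom, ((Fin.snoc a c : Fin (k + 1) → CompFam D F) (Fin.last k)).val p (h (Fin.last k)), ?_⟩
      have e : Fin.snoc (fun i => (a i).val p (hdom i))
          (((Fin.snoc a c : Fin (k + 1) → CompFam D F) (Fin.last k)).val p (h (Fin.last k))) =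
          fun i => ((Fin.snoc a c : Fin (k + 1) → CompFam D F) i).val p (h i) := by
        funext i
        refine Fin.lastCases ?_ (fun j => ?_) i
        · rw [Fin.snoc_last]
        · rw [Fin.snoc_castSucc]
          exact val_congr (snoc_fam_castSucc a c j).symm _ _
      rw [e]
      exact hr
    · intro hmem
      set V := posSet (PosFormula.ex φ) a with hVdef
      have hw : ∀ m ∈ V, ∃ w : M m, ∃ h : ∀ i, m ∈ (a i).dom,
          PosFormula.Realize φ Empty.elim (Fin.snoc (fun i => (a i).val m (h i)) w) := by
        rintro m ⟨h, w, hr⟩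
        exact ⟨w, h, hr⟩
      choose w hdom hwreal using hw
      let c : CompFam D F :=
        { dom := V
          dom_mem := hmem
          val := fun p hp =>
            D.hom (minPt_le hX V p hp) (w (minPt hX V p hp) (minPt_mem hX V p hp))
          compat := by
            intro b c' hb hc hbc
            rw [D.hom_comp]
            exact hom_congr_pt (fun m hm => w m hm) (minPt_eq hX V hb hc hbc) _ _ _ _ }
      have hsub : V ⊆ posSet φ (Fin.snoc a c) := by
        intro p hp
        have hmm := minPt_mem hX V p hp
        have hle := minPt_le hX V p hp
        have hreal := PosFormula.realize_map (D.hom hle) φ Empty.elim _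
          (hwreal (minPt hX V p hp) hmm)
        have e0 : (D.hom hle) ∘ (Empty.elim : Empty → M (minPt hX V p hp)) = Empty.elim :=
          funext fun e => e.elim
        rw [e0, Fin.comp_snoc] at hreal
        have hdp : ∀ i : Fin (k + 1), p ∈ ((Fin.snoc a c : Fin (k + 1) → CompFam D F) i).dom := by
          intro i
          refine Fin.lastCases ?_ (fun j => ?_) i
          · rw [Fin.snoc_last]
            exact hp
          · rw [Fin.snoc_castSucc]
            exact F.upper' _ (a j).dom_mem hle (hdom (minPt hX V p hp) hmm j)
        refine ⟨hdp, ?_⟩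
        have e1 : (fun i => ((Fin.snoc a c : Fin (k + 1) → CompFam D F) i).val p (hdp i)) =
            Fin.snoc ((D.hom hle) ∘ fun i => (a i).val (minPt hX V p hp)
              (hdom (minPt hX V p hp) hmm i))
              (D.hom hle (w (minPt hX V p hp) hmm)) := by
          funext i
          refine Fin.lastCases ?_ (fun j => ?_) i
          · conv_rhs => rw [Fin.snoc_last]
            exact val_congr (snoc_fam_last a c) _ _
          · conv_rhs => rw [Fin.snoc_castSucc]
            exact (val_congr (snoc_fam_castSucc a c j) (hdp j.castSucc)
                (F.upper' _ (a j).dom_mem hle (hdom (minPt hX V p hp) hmm j))).trans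
              (((a j).compat (hdom (minPt hX V p hp) hmm j)
                (F.upper' _ (a j).dom_mem hle (hdom (minPt hX V p hp) hmm j)) hle).symm)
        rw [e1]
        exact hreal
      have hreal2 := (ih (Fin.snoc a c)).2 (F.mono' _ hmem _ (posSet_upper _ _) hsub)
      refine ⟨Quotient.mk (CompFam.setoid D F) c, ?_⟩
      have hr3 : PosFormula.Realize (M := FilterProd D F) φ Empty.elim
          (Quotient.mk (CompFam.setoid D F) ∘ Fin.snoc a c) := hreal2
      have e : (Fin.snoc (fun i => Quotient.mk (CompFam.setoid D F) (a i))
          (Quotient.mk (CompFam.setoid D F) c) : Fin (k + 1) → FilterProd D F) =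
          Quotient.mk (CompFam.setoid D F) ∘ Fin.snoc a c := (Fin.comp_snoc _ _ _).symm
      rw [e]
      exact hr3

end PosLogic
end

section
/- A positively saturated structure M is positively universal among smaller structures with weaker positive theories: if M satisfies the positive theory of a structure N (in the same language) with |N| ≤ |M|, then there exists a homomorphism f : N → M. -/
namespace PosLogic

open FirstOrder FirstOrder.Language FirstOrder.Language.Structure Set

universe u v w x y z

variable {L : FirstOrder.Language.{u, v}}

variable {α : Type y}

variable {X : Type x} [PartialOrder X] {M : X → Type w} [∀ a, L.Structure (M a)]

variable {D : OrderedSystem L X M} {F : PosetFilter X}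

section Stmt15Aux

variable {β : Type z} {M : Type w} [L.Structure M]

/-- Relabel the parameters of a positive formula along a map. -/
def PosFormula.map (h : α → β) : ∀ {n : ℕ}, PosFormula L α n → PosFormula L β n
  | _, .falsum => .falsum
  | _, .equal t₁ t₂ => .equal (t₁.relabel (Sum.map h id)) (t₂.relabel (Sum.map h id))
  | _, .rel R ts => .rel R fun i => (ts i).relabel (Sum.map h id)
  | _, .and φ ψ => .and (φ.map h) (ψ.map h)
  | _, .or φ ψ => .or (φ.map h) (ψ.map h)
  | _, .ex φ => .ex (φ.map h)

theorem PosFormula.realize_map_s15 (h : α → β) :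
    ∀ {n : ℕ} (φ : PosFormula L α n) (v : β → M) (xs : Fin n → M),
      (φ.map h).Realize v xs ↔ φ.Realize (v ∘ h) xs
  | _, .falsum, _, _ => Iff.rfl
  | _, .equal t₁ t₂, v, xs => by
      simp [PosFormula.map, PosFormula.Realize, Term.realize_relabel, Sum.elim_comp_map]
  | _, .rel R ts, v, xs => by
      simp [PosFormula.map, PosFormula.Realize, Term.realize_relabel, Sum.elim_comp_map]
  | _, .and φ ψ, v, xs => by
      simp [PosFormula.map, PosFormula.Realize, realize_map_s15 h φ v xs, realize_map_s15 h ψ v xs]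
  | _, .or φ ψ, v, xs => by
      simp [PosFormula.map, PosFormula.Realize, realize_map_s15 h φ v xs, realize_map_s15 h ψ v xs]
  | _, .ex φ, v, xs => by
      simp only [PosFormula.map, PosFormula.Realize]
      exact exists_congr fun a => realize_map_s15 h φ v (Fin.snoc xs a)

/-- Turn some parameters of a positive formula into extra free variables. -/
def PosFormula.relabelP {m : ℕ} (g : α → β ⊕ Fin m) :
    ∀ {n : ℕ}, PosFormula L α n → PosFormula L β (m + n)
  | _, .falsum => .falsum
  | _, .equal t₁ t₂ => .equal (t₁.relabel (BoundedFormula.relabelAux g _))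
      (t₂.relabel (BoundedFormula.relabelAux g _))
  | _, .rel R ts => .rel R fun i => (ts i).relabel (BoundedFormula.relabelAux g _)
  | _, .and φ ψ => .and (φ.relabelP g) (ψ.relabelP g)
  | _, .or φ ψ => .or (φ.relabelP g) (ψ.relabelP g)
  | _, .ex φ => .ex (φ.relabelP g)

theorem PosFormula.realize_relabelP {m : ℕ} (g : α → β ⊕ Fin m) :
    ∀ {n : ℕ} (φ : PosFormula L α n) (v : β → M) (xs : Fin (m + n) → M),
      (φ.relabelP g).Realize v xs ↔
        φ.Realize (Sum.elim v (xs ∘ Fin.castAdd n) ∘ g) (xs ∘ Fin.natAdd m)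
  | _, .falsum, _, _ => Iff.rfl
  | _, .equal t₁ t₂, v, xs => by
      simp [PosFormula.relabelP, PosFormula.Realize, Term.realize_relabel]
  | _, .rel R ts, v, xs => by
      simp [PosFormula.relabelP, PosFormula.Realize, Term.realize_relabel]
  | _, .and φ ψ, v, xs => by
      simp [PosFormula.relabelP, PosFormula.Realize, realize_relabelP g φ v xs,
        realize_relabelP g ψ v xs]
  | _, .or φ ψ, v, xs => by
      simp [PosFormula.relabelP, PosFormula.Realize, realize_relabelP g φ v xs,
        realize_relabelP g ψ v xs]
  | n, .ex φ, v, xs => by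
      simp only [PosFormula.relabelP, PosFormula.Realize]
      refine exists_congr fun a => ?_
      rw [realize_relabelP g φ v (Fin.snoc xs a), Fin.snoc_comp_castAdd,
        Fin.snoc_comp_natAdd]

end Stmt15Aux
section RealizeLemmas

variable {M : Type w} [L.Structure M] {n : ℕ}

theorem PosFormula.realize_equal' {t₁ t₂ : L.Term (α ⊕ Fin n)} {v : α → M} {xs : Fin n → M} :
    (PosFormula.equal t₁ t₂).Realize v xs ↔
      t₁.realize (Sum.elim v xs) = t₂.realize (Sum.elim v xs) := by
  simp [PosFormula.Realize]

theorem PosFormula.realize_rel' {l : ℕ} {R : L.Relations l} {ts : Fin l → L.Term (α ⊕ Fin n)}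
    {v : α → M} {xs : Fin n → M} :
    (PosFormula.rel R ts).Realize v xs ↔
      RelMap R fun i => (ts i).realize (Sum.elim v xs) := by
  simp [PosFormula.Realize]

theorem PosFormula.realize_and' {φ ψ : PosFormula L α n} {v : α → M} {xs : Fin n → M} :
    (PosFormula.and φ ψ).Realize v xs ↔ φ.Realize v xs ∧ ψ.Realize v xs := by
  simp [PosFormula.Realize]

theorem PosFormula.realize_ex' {φ : PosFormula L α (n + 1)} {v : α → M} {xs : Fin n → M} :
    (PosFormula.ex φ).Realize v xs ↔ ∃ a, φ.Realize v (Fin.snoc xs a) := by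
  simp [PosFormula.Realize]

end RealizeLemmas
variable (L) in
/-- The invariant for the Zorn argument in `stmt15`: `p.1` is an initial segment of the
well-order `r`, and `p.2` preserves all positive formulas with parameters in `p.1`. -/
def Stmt15Good {A B : Type w} [L.Structure A] [L.Structure B] (r : B → B → Prop)
    (p : Set B × (B → A)) : Prop :=
  (∀ ⦃x y : B⦄, r x y → y ∈ p.1 → x ∈ p.1) ∧
  ∀ (γ : Type w) (_ : Finite γ) (h : γ → B), (∀ i, h i ∈ p.1) →
    ∀ φ : PosFormula L γ 0, PosFormula.Realize φ h finZeroElim →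
      PosFormula.Realize φ (p.2 ∘ h) finZeroElim

theorem realize_transfer_of_isEmpty {A B : Type w} [L.Structure A] [L.Structure B]
    (hth : ∀ φ : PosSentence L, PosSentence.Realize B φ → PosSentence.Realize A φ)
    {γ : Type w} [IsEmpty γ] (h : γ → B) (g : γ → A) (φ : PosFormula L γ 0)
    (hφ : PosFormula.Realize φ h finZeroElim) :
    PosFormula.Realize φ g finZeroElim := by
  have e : γ → Empty := fun i => isEmptyElim i
  have h1 : PosSentence.Realize B (φ.map e) := by
    unfold PosSentence.Realize
    rw [PosFormula.realize_map_s15]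
    rw [show (Empty.elim ∘ e : γ → B) = h from funext fun i => isEmptyElim i,
        show (fun i : Fin 0 => i.elim0) = (finZeroElim : Fin 0 → B) from
          funext fun i => i.elim0]
    exact hφ
  have h2 := hth _ h1
  unfold PosSentence.Realize at h2
  rw [PosFormula.realize_map_s15] at h2
  rwa [show (Empty.elim ∘ e : γ → A) = g from funext fun i => isEmptyElim i,
      show (fun i : Fin 0 => i.elim0) = (finZeroElim : Fin 0 → A) from
        funext fun i => i.elim0] at h2

/-- A positively saturated structure is positively universal among smaller structures with
weaker positive theories. -/
theorem stmt15 (A B : Type w) [L.Structure A] [L.Structure B]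
    (hsat : PositivelySaturated (L := L) A)
    (hth : ∀ φ : PosSentence L, PosSentence.Realize B φ → PosSentence.Realize A φ)
    (hcard : Cardinal.mk B ≤ Cardinal.mk A) :
    Nonempty (B →[L] A) := by
  classical
  rcases isEmpty_or_nonempty B with hBe | hBne
  · -- `B` is empty
    refine ⟨⟨fun b => isEmptyElim b, ?_, ?_⟩⟩
    · intro k f x
      exact isEmptyElim (funMap f x)
    · intro k R x hx
      cases k with
      | succ k => exact isEmptyElim (x 0)
      | zero =>
        have hB : PosSentence.Realize B ((.rel R fun i => i.elim0 : PosFormula L Empty 0)) := by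
          rw [PosSentence.Realize, PosFormula.realize_rel']
          rw [show (fun i : Fin 0 => Term.realize (M := B)
            (Sum.elim Empty.elim fun i : Fin 0 => i.elim0) (i.elim0 : L.Term _)) = x from
              funext fun i => i.elim0]
          exact hx
        have hA := hth _ hB
        rw [PosSentence.Realize, PosFormula.realize_rel'] at hA
        rw [show ((fun b => isEmptyElim b : B → A) ∘ x) =
          (fun i : Fin 0 => Term.realize (M := A)
            (Sum.elim Empty.elim fun i : Fin 0 => i.elim0) (i.elim0 : L.Term _)) from
              funext fun i => i.elim0]
        exact hA
  · -- `B` is nonempty; first, so is `A`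
    have hA : Nonempty A := by
      have hB : PosSentence.Realize B
          ((.ex (.equal (Term.var (Sum.inr 0)) (Term.var (Sum.inr 0)))) : PosSentence L) := by
        rw [PosSentence.Realize, PosFormula.realize_ex']
        exact ⟨Classical.arbitrary B, by rw [PosFormula.realize_equal']⟩
      have h2 := hth _ hB
      rw [PosSentence.Realize, PosFormula.realize_ex'] at h2
      obtain ⟨a, -⟩ := h2
      exact ⟨a⟩
    have a0 : A := Classical.choice hA
    obtain ⟨r, wo, hr⟩ := Cardinal.ord_eq B
    haveI := wo
    -- Zorn's lemma on partial homomorphisms defined on initial segments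
    let P := {p : Set B × (B → A) // Stmt15Good L r p}
    let rel : P → P → Prop := fun p q => p.1.1 ⊆ q.1.1 ∧ ∀ x ∈ p.1.1, p.1.2 x = q.1.2 x
    haveI : IsRefl P rel := ⟨fun p => ⟨subset_rfl, fun _ _ => rfl⟩⟩
    have hgoodbot : Stmt15Good L r ((∅ : Set B), fun _ => a0) := by
      constructor
      · intro x y _ hy
        exact absurd hy (Set.notMem_empty y)
      · intro γ _ h hmem φ hφ
        haveI : IsEmpty γ := ⟨fun i => absurd (hmem i) (Set.notMem_empty _)⟩
        exact realize_transfer_of_isEmpty hth h _ φ hφ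
    have hchain : ∀ c : Set P, IsChain rel c → ∃ ub : P, ∀ a ∈ c, rel a ub := by
      intro c hc
      rcases c.eq_empty_or_nonempty with rfl | hce
      · exact ⟨⟨(∅, fun _ => a0), hgoodbot⟩, fun a ha => absurd ha (Set.notMem_empty a)⟩
      · let T : Set B := ⋃ p ∈ c, (p : P).1.1
        let gT : B → A := fun x =>
          if hx : ∃ p ∈ c, x ∈ (p : P).1.1 then hx.choose.1.2 x else a0
        have hagree : ∀ p ∈ c, ∀ x ∈ (p : P).1.1, gT x = p.1.2 x := by
          intro p hp x hx
          have hex : ∃ q ∈ c, x ∈ (q : P).1.1 := ⟨p, hp, hx⟩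
          have h1 : gT x = hex.choose.1.2 x := dif_pos hex
          obtain ⟨hqc, hxq⟩ := hex.choose_spec
          rcases eq_or_ne p hex.choose with he | hne
          · rw [h1, ← he]
          · rcases hc.total hp hqc with h2 | h2
            · rw [h1, ← h2.2 x hx]
            · rw [h1, h2.2 x hxq]
        have hcover : ∀ s : Finset B, (∀ x ∈ s, ∃ p ∈ c, x ∈ (p : P).1.1) →
            ∃ p ∈ c, ∀ x ∈ s, x ∈ (p : P).1.1 := by
          intro s
          induction s using Finset.induction_on with
          | empty =>
            intro _
            obtain ⟨p, hp⟩ := hce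
            exact ⟨p, hp, by simp⟩
          | @insert a s ha ih =>
            intro hall
            obtain ⟨p, hp, hps⟩ := ih fun x hx => hall x (Finset.mem_insert_of_mem hx)
            obtain ⟨q, hq, hqa⟩ := hall a (Finset.mem_insert_self _ _)
            rcases hc.total hp hq with h1 | h1
            · refine ⟨q, hq, fun x hx => ?_⟩
              rcases Finset.mem_insert.1 hx with rfl | hx
              · exact hqa
              · exact h1.1 (hps x hx)
            · refine ⟨p, hp, fun x hx => ?_⟩
              rcases Finset.mem_insert.1 hx with rfl | hx
              · exact h1.1 hqa
              · exact hps x hx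
        have hTgood : Stmt15Good L r (T, gT) := by
          constructor
          · intro x y hxy hy
            simp only [T, Set.mem_iUnion, exists_prop] at hy ⊢
            obtain ⟨p, hp, hyp⟩ := hy
            exact ⟨p, hp, p.2.1 hxy hyp⟩
          · intro γ hγ h hmem φ hφ
            haveI := hγ
            haveI := Fintype.ofFinite γ
            have hall : ∀ x ∈ Finset.univ.image h, ∃ p ∈ c, x ∈ (p : P).1.1 := by
              intro x hx
              obtain ⟨i, -, rfl⟩ := Finset.mem_image.1 hx
              have hhi := hmem i
              simp only [T, Set.mem_iUnion, exists_prop] at hhi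
              exact hhi
            obtain ⟨p, hp, hpmem⟩ := hcover _ hall
            have hmem' : ∀ i, h i ∈ (p : P).1.1 := fun i =>
              hpmem _ (Finset.mem_image_of_mem h (Finset.mem_univ i))
            have hres := p.2.2 γ hγ h hmem' φ hφ
            rwa [show (gT ∘ h) = p.1.2 ∘ h from
              funext fun i => hagree p hp _ (hmem' i)]
        refine ⟨⟨(T, gT), hTgood⟩, fun p hp => ⟨?_, ?_⟩⟩
        · intro x hx
          simp only [T, Set.mem_iUnion, exists_prop]
          exact ⟨p, hp, hx⟩
        · intro x hx
          exact (hagree p hp x hx).symm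
    obtain ⟨⟨⟨S, g⟩, hSg⟩, hmax⟩ :=
      exists_maximal_of_chains_bounded hchain
        (fun {a b c} hab hbc => ⟨hab.1.trans hbc.1,
          fun x hx => (hab.2 x hx).trans (hbc.2 x (hab.1 hx))⟩)
    -- the maximal partial homomorphism is total
    have hSuniv : S = Set.univ := by
      by_contra hne
      obtain ⟨x₀, hx₀⟩ := (Set.ne_univ_iff_exists_notMem S).1 hne
      have hcne : Sᶜ.Nonempty := ⟨x₀, hx₀⟩
      set b := wo.wf.min Sᶜ hcne with hbdef
      have hbS : b ∉ S := wo.wf.min_mem Sᶜ hcne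
      have hmin : ∀ y, r y b → y ∈ S := fun y hy =>
        by_contra fun hy' => wo.wf.not_lt_min Sᶜ hy' hy
      have hSsub : S ⊆ {y | r y b} := by
        intro y hy
        rcases trichotomous_of r y b with h | h | h
        · exact h
        · exact absurd (h ▸ hy) hbS
        · exact absurd (hSg.1 h hy) hbS
      have hlt : Cardinal.mk ↥S < Cardinal.mk A := by
        calc Cardinal.mk ↥S ≤ Cardinal.mk ↥{y | r y b} := Cardinal.mk_le_mk_of_subset hSsub
          _ = (Ordinal.typein r b).card := Ordinal.card_typein b
          _ < Cardinal.mk B := Cardinal.card_typein_lt (r := r) b hr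
          _ ≤ Cardinal.mk A := hcard
      let vp : ↥S → A := fun y => g y.1
      let p : Set (PosFormula L (↥S) 1) :=
        {Ψ | ∃ (γ : Type w) (_ : Finite γ) (φ : PosFormula L γ 1) (k : γ → ↥S),
          Ψ = φ.map k ∧
            PosFormula.Realize (M := B) φ (fun i => (k i : B)) (fun _ => b)}
      have hfinsat : ∀ s : Finset (PosFormula L (↥S) 1), ↑s ⊆ p →
          ∃ xs : Fin 1 → A, ∀ Ψ ∈ s, PosFormula.Realize Ψ vp xs := by
        intro s hs
        have key : ∀ s : Finset (PosFormula L (↥S) 1), ↑s ⊆ p →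
            ∃ (γ : Type w) (_ : Finite γ) (φ : PosFormula L γ 1) (k : γ → ↥S),
              PosFormula.Realize (M := B) φ (fun i => (k i : B)) (fun _ => b) ∧
              ∀ xs : Fin 1 → A,
                PosFormula.Realize (M := A) φ (fun i => g (k i : B)) xs →
                ∀ Ψ ∈ s, PosFormula.Realize Ψ vp xs := by
          intro s
          induction s using Finset.induction_on with
          | empty =>
            intro _
            refine ⟨PEmpty.{w+1}, inferInstance,
              .equal (Term.var (Sum.inr 0)) (Term.var (Sum.inr 0)),
              fun i => i.elim, by rw [PosFormula.realize_equal'],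
              fun xs _ Ψ hΨ => absurd hΨ (by simp)⟩
          | @insert a s ha ih =>
            intro hall
            obtain ⟨γ₁, hγ₁, φ₁, k₁, haeq, hB₁⟩ := hall (Finset.mem_insert_self a s)
            obtain ⟨γ₂, hγ₂, φ₂, k₂, hB₂, himp₂⟩ :=
              ih fun x hx => hall (Finset.mem_insert_of_mem hx)
            haveI := hγ₁; haveI := hγ₂
            refine ⟨γ₁ ⊕ γ₂, inferInstance, .and (φ₁.map Sum.inl) (φ₂.map Sum.inr),
              Sum.elim k₁ k₂, ?_, ?_⟩
            · rw [PosFormula.realize_and', PosFormula.realize_map_s15, PosFormula.realize_map_s15]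
              exact ⟨hB₁, hB₂⟩
            · intro xs hxs' Ψ hΨ
              rw [PosFormula.realize_and', PosFormula.realize_map_s15,
                PosFormula.realize_map_s15] at hxs'
              obtain ⟨h1, h2⟩ := hxs'
              rcases Finset.mem_insert.1 hΨ with rfl | hΨ
              · rw [haeq, PosFormula.realize_map_s15]
                exact h1
              · exact himp₂ xs h2 Ψ hΨ
        obtain ⟨γ, hγ, φ, k, hφB, himp⟩ := key s hs
        have hexB : PosFormula.Realize (M := B) (.ex φ) (fun i => (k i : B)) finZeroElim := by
          rw [PosFormula.realize_ex']
          refine ⟨b, ?_⟩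
          rw [Fin.snoc_zero]
          exact hφB
        have hexA := hSg.2 γ hγ (fun i => (k i : B)) (fun i => (k i).2) (.ex φ) hexB
        rw [PosFormula.realize_ex'] at hexA
        obtain ⟨a, ha⟩ := hexA
        rw [Fin.snoc_zero] at ha
        exact ⟨fun _ => a, fun Ψ hΨ => himp (fun _ => a) ha Ψ hΨ⟩
      obtain ⟨xs, hxs⟩ := hsat (↥S) vp hlt 1 p hfinsat
      -- extend the maximal partial homomorphism by `b ↦ xs 0`, contradiction
      let g' : B → A := Function.update g b (xs 0)
      have hb_ne : ∀ x ∈ S, x ≠ b := fun x hx => ne_of_mem_of_not_mem hx hbS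
      have hgood' : Stmt15Good L r (insert b S, g') := by
        constructor
        · intro x y hxy hy
          rcases hy with rfl | hyS
          · exact Set.mem_insert_iff.2 (Or.inr (hmin x hxy))
          · exact Set.mem_insert_iff.2 (Or.inr (hSg.1 hxy hyS))
        · intro γ hγ h hmem φ hφ
          haveI := hγ
          have hb_eq : ∀ i, h i ∉ S → h i = b := by
            intro i hi
            rcases hmem i with he | h'
            · exact he
            · exact absurd h' hi
          let γ₀ := {i : γ // h i ∈ S}
          let kk : γ → γ₀ ⊕ Fin 1 := fun i =>
            if hi : h i ∈ S then Sum.inl ⟨i, hi⟩ else Sum.inr 0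
          let k₀ : γ₀ → ↥S := fun i => ⟨h i.1, i.2⟩
          let ψ : PosFormula L γ₀ 1 := φ.relabelP kk
          have hv1 : (Sum.elim (fun i => (k₀ i : B))
              (((fun _ => b) : Fin 1 → B) ∘ Fin.castAdd 0) ∘ kk) = h := by
            funext i
            by_cases hi : h i ∈ S
            · simp only [kk, dif_pos hi, Function.comp_apply, Sum.elim_inl, k₀]
            · simp only [kk, dif_neg hi, Function.comp_apply, Sum.elim_inr]
              exact (hb_eq i hi).symm
          have hψB : PosFormula.Realize (M := B) ψ (fun i => (k₀ i : B)) (fun _ => b) := by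
            show (φ.relabelP kk).Realize _ _
            rw [PosFormula.realize_relabelP, hv1,
              show ((fun _ => b : Fin 1 → B) ∘ Fin.natAdd 1 : Fin 0 → B) = finZeroElim from
                funext fun i => i.elim0]
            exact hφ
          have hΨp : ψ.map k₀ ∈ p := ⟨γ₀, inferInstance, ψ, k₀, rfl, hψB⟩
          have hΨA := hxs _ hΨp
          rw [PosFormula.realize_map_s15, PosFormula.realize_relabelP] at hΨA
          have hv2 : (Sum.elim (vp ∘ k₀) (xs ∘ Fin.castAdd 0) ∘ kk) = g' ∘ h := by
            funext i
            by_cases hi : h i ∈ S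
            · simp only [kk, dif_pos hi, Function.comp_apply, Sum.elim_inl, vp, k₀, g']
              exact (Function.update_of_ne (hb_ne _ hi) _ _).symm
            · simp only [kk, dif_neg hi, Function.comp_apply, Sum.elim_inr, g']
              rw [hb_eq i hi, Function.update_self]
              exact congrArg xs (Fin.ext rfl)
          rw [hv2] at hΨA
          rwa [show (xs ∘ Fin.natAdd 1 : Fin 0 → A) = finZeroElim from
            funext fun i => i.elim0] at hΨA
      have hle : rel ⟨(S, g), hSg⟩ ⟨(insert b S, g'), hgood'⟩ :=
        ⟨Set.subset_insert b S, fun x hx =>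
          (Function.update_of_ne (hb_ne x hx) _ _).symm⟩
      exact hbS ((hmax _ hle).1 (Set.mem_insert b S))
    -- turn the total map into a homomorphism
    refine ⟨⟨g, ?_, ?_⟩⟩
    · intro k fn x
      let γ : Type w := ULift.{w} (Fin k) ⊕ PUnit.{w+1}
      let h : γ → B := Sum.elim (fun i => x i.down) fun _ => funMap fn x
      let φ : PosFormula L γ 0 :=
        .equal (Term.func fn fun i => Term.var (Sum.inl (Sum.inl ⟨i⟩)))
          (Term.var (Sum.inl (Sum.inr PUnit.unit)))
      have hB : PosFormula.Realize (M := B) φ h finZeroElim := by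
        rw [PosFormula.realize_equal']
        simp only [Term.realize, Sum.elim_inl, Sum.elim_inr, h]
      have hA := hSg.2 γ inferInstance h (fun i => by rw [hSuniv]; trivial) φ hB
      rw [PosFormula.realize_equal'] at hA
      simp only [Term.realize, Sum.elim_inl, Sum.elim_inr, Function.comp_apply, h] at hA
      exact hA.symm
    · intro k R x hx
      let γ : Type w := ULift.{w} (Fin k)
      let h : γ → B := fun i => x i.down
      let φ : PosFormula L γ 0 := .rel R fun i => Term.var (Sum.inl ⟨i⟩)
      have hB : PosFormula.Realize (M := B) φ h finZeroElim := by
        rw [PosFormula.realize_rel']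
        exact hx
      have hA := hSg.2 γ inferInstance h (fun i => by rw [hSuniv]; trivial) φ hB
      rw [PosFormula.realize_rel'] at hA
      exact hA

end PosLogic
end

section
/- If M is a positively existentially closed model of an h-inductive theory T and f : N → M is an immersion, then N is also a positively existentially closed model of T. -/
namespace PosLogic

open FirstOrder FirstOrder.Language FirstOrder.Language.Structure Set

universe u v w x y z

variable {L : FirstOrder.Language.{u, v}}

variable {α : Type y}

variable {X : Type x} [PartialOrder X] {M : X → Type w} [∀ a, L.Structure (M a)]

variable {D : OrderedSystem L X M} {F : PosetFilter X}

/-! ### Auxiliary material for `stmt16` -/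

section Stmt16Aux

open FirstOrder.Language

/-- Translation of positive formulas into `BoundedFormula`. -/
def PosFormula.toBF : ∀ {n : ℕ}, PosFormula L α n → L.BoundedFormula α n
  | _, .falsum => ⊥
  | _, .equal t₁ t₂ => t₁.bdEqual t₂
  | _, .rel R ts => R.boundedFormula ts
  | _, .and φ ψ => φ.toBF ⊓ ψ.toBF
  | _, .or φ ψ => φ.toBF ⊔ ψ.toBF
  | _, .ex φ => φ.toBF.ex

theorem PosFormula.realize_toBF {M : Type*} [L.Structure M] :
    ∀ {n : ℕ} (φ : PosFormula L α n) (v : α → M) (xs : Fin n → M),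
      φ.toBF.Realize v xs ↔ φ.Realize v xs
  | _, .falsum, v, xs => by
    simp [toBF, PosFormula.Realize]
  | _, .equal t₁ t₂, v, xs => by
    simp [toBF, PosFormula.Realize, BoundedFormula.realize_bdEqual]
  | _, .rel R ts, v, xs => by
    simp [toBF, PosFormula.Realize, BoundedFormula.realize_rel]
  | _, .and φ ψ, v, xs => by
    simp [toBF, PosFormula.Realize, BoundedFormula.realize_inf,
      PosFormula.realize_toBF φ, PosFormula.realize_toBF ψ]
  | _, .or φ ψ, v, xs => by
    simp [toBF, PosFormula.Realize, BoundedFormula.realize_sup,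
      PosFormula.realize_toBF φ, PosFormula.realize_toBF ψ]
  | _, .ex φ, v, xs => by
    simp [toBF, PosFormula.Realize, BoundedFormula.realize_ex,
      PosFormula.realize_toBF φ]

/-- Homomorphisms preserve positive formulas. -/
theorem realize_of_hom {M : Type*} {N : Type*} [L.Structure M] [L.Structure N]
    (g : M →[L] N) :
    ∀ {n : ℕ} (φ : PosFormula L α n) (v : α → M) (xs : Fin n → M),
      φ.Realize v xs → φ.Realize (⇑g ∘ v) (⇑g ∘ xs)
  | _, .falsum, _, _, h => h.elim
  | _, .equal t₁ t₂, v, xs, h => by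
    have hc : (Sum.elim (⇑g ∘ v) (⇑g ∘ xs) : _ ⊕ _ → N) = ⇑g ∘ Sum.elim v xs := by
      funext i; cases i <;> rfl
    show t₁.realize _ = t₂.realize _
    rw [hc]
    simp only [HomClass.realize_term]
    exact congrArg g h
  | _, .rel R ts, v, xs, h => by
    have hc : (Sum.elim (⇑g ∘ v) (⇑g ∘ xs) : _ ⊕ _ → N) = ⇑g ∘ Sum.elim v xs := by
      funext i; cases i <;> rfl
    show Structure.RelMap R _
    have h2 : (fun i => (ts i).realize (Sum.elim (⇑g ∘ v) (⇑g ∘ xs))) =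
        ⇑g ∘ fun i => (ts i).realize (Sum.elim v xs) := by
      funext i; rw [hc]; exact HomClass.realize_term _
    rw [h2]
    exact g.map_rel R _ h
  | _, .and φ ψ, v, xs, h =>
    ⟨realize_of_hom g φ v xs h.1, realize_of_hom g ψ v xs h.2⟩
  | _, .or φ ψ, v, xs, h =>
    h.elim (fun h' => Or.inl (realize_of_hom g φ v xs h'))
      (fun h' => Or.inr (realize_of_hom g ψ v xs h'))
  | _, .ex φ, v, xs, h => by
    obtain ⟨a, ha⟩ := h
    refine ⟨g a, ?_⟩
    have := realize_of_hom g φ v (Fin.snoc xs a) ha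
    rwa [Fin.comp_snoc] at this

/-- Existential closure of the last `m` variables. -/
def PosFormula.exs : ∀ {n m : ℕ}, PosFormula L α (n + m) → PosFormula L α n
  | _, 0, φ => φ
  | _, _ + 1, φ => PosFormula.exs φ.ex

theorem PosFormula.realize_exs {M : Type*} [L.Structure M] :
    ∀ {n m : ℕ} (φ : PosFormula L α (n + m)) (v : α → M) (xs : Fin n → M),
      φ.exs.Realize v xs ↔ ∃ ys : Fin m → M, φ.Realize v (Fin.append xs ys)
  | n, 0, φ, v, xs => by
    have happ : ∀ ys : Fin 0 → M, Fin.append xs ys = xs := fun ys => by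
      rw [Subsingleton.elim ys Fin.elim0, Fin.append_elim0]
      exact funext fun i => congrArg xs (Fin.ext rfl)
    show φ.Realize v xs ↔ _
    exact ⟨fun h => ⟨Fin.elim0, by rw [happ]; exact h⟩,
      fun ⟨ys, h⟩ => by rw [happ ys] at h; exact h⟩
  | n, m + 1, φ, v, xs => by
    show (PosFormula.exs φ.ex).Realize v xs ↔ _
    rw [PosFormula.realize_exs φ.ex v xs]
    constructor
    · rintro ⟨ys, a, ha⟩
      exact ⟨Fin.snoc ys a, by rwa [Fin.append_snoc]⟩
    · rintro ⟨ys, h⟩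
      refine ⟨Fin.init ys, ys (Fin.last m), ?_⟩
      rw [← Fin.append_snoc, Fin.snoc_init_self]
      exact h

/-- Finite conjunction of positive formulas. -/
def PosFormula.conjL {n : ℕ} (φ : PosFormula L α n) (l : List (PosFormula L α n)) :
    PosFormula L α n :=
  l.foldr .and φ

theorem PosFormula.realize_conjL {M : Type*} [L.Structure M] {n : ℕ}
    (φ : PosFormula L α n) (l : List (PosFormula L α n)) (v : α → M) (xs : Fin n → M) :
    (φ.conjL l).Realize v xs ↔ φ.Realize v xs ∧ ∀ ψ ∈ l, ψ.Realize v xs := by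
  induction l with
  | nil => simp [PosFormula.conjL]
  | cons ψ t ih =>
    show (PosFormula.Realize (.and ψ (PosFormula.conjL φ t)) v xs) ↔ _
    have : PosFormula.Realize (.and ψ (PosFormula.conjL φ t)) v xs ↔
        ψ.Realize v xs ∧ (PosFormula.conjL φ t).Realize v xs := Iff.rfl
    rw [this, ih]
    simp only [List.mem_cons]
    constructor
    · rintro ⟨h1, h2, h3⟩
      exact ⟨h2, fun χ hχ => hχ.elim (fun h => h ▸ h1) (h3 χ)⟩
    · rintro ⟨h1, h2⟩
      exact ⟨h2 ψ (Or.inl rfl), h1, fun χ hχ => h2 χ (Or.inr hχ)⟩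

variable (L) in
/-- Atomic constraints used to build the positive diagram of `A` over `B`. -/
inductive Con (A : Type w) (B : Type x) [L.Structure A] : Type (max u v w x) where
  | fn : {n : ℕ} → (F : L.Functions n) → (as : Fin n → A) → Con A B
  | rl : {n : ℕ} → (R : L.Relations n) → (as : Fin n → A) →
      Structure.RelMap R as → Con A B
  | anchor : B → Con A B

variable {A B P : Type w} [L.Structure A] [L.Structure B] [L.Structure P]

/-- Satisfaction of a constraint by an assignment `σ : A → P` over `f`, `g`. -/
def Con.sat (f : B → A) (g : B → P) (σ : A → P) : Con L A B → Prop
  | .fn F as => σ (funMap F as) = funMap F (σ ∘ as)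
  | .rl R as _ => Structure.RelMap R (σ ∘ as)
  | .anchor b => σ (f b) = g b

/-- The elements of `A` mentioned by a constraint. -/
def conElems (f : B → A) : Con L A B → List A
  | .fn F as => funMap F as :: List.ofFn as
  | .rl _ as _ => List.ofFn as
  | .anchor b => [f b]

section WitnessDefs

variable [DecidableEq A] [DecidableEq B] (f : B → A) (l : List (Con L A B))

/-- All elements of `A` mentioned by a list of constraints. -/
def elemsL : List A := l.flatMap (conElems f)

/-- All anchored elements of `B` in a list of constraints. -/
def bsL : List B := l.filterMap fun c => match c with | .anchor b => some b | _ => none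

/-- The variable corresponding to an element of `A`. -/
def avr (a : A) (h : a ∈ elemsL f l) : Fin ((bsL (L := L) (A := A) l).length + (elemsL f l).length) :=
  Fin.natAdd _ ⟨(elemsL f l).idxOf a, List.idxOf_lt_length_iff.2 h⟩

/-- The variable corresponding to an anchored element of `B`. -/
def bvr (b : B) (h : b ∈ bsL (L := L) (A := A) l) :
    Fin ((bsL (L := L) (A := A) l).length + (elemsL f l).length) :=
  Fin.castAdd _ ⟨(bsL (L := L) (A := A) l).idxOf b, List.idxOf_lt_length_iff.2 h⟩

/-- The atomic positive formula corresponding to a constraint. -/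
def conOf : (c : Con L A B) → c ∈ l →
    PosFormula L Empty ((bsL (L := L) (A := A) l).length + (elemsL f l).length)
  | .fn F as, hc =>
    .equal (Term.func F fun i => Term.var (Sum.inr (avr f l (as i)
        (List.mem_flatMap.2 ⟨_, hc, List.mem_cons_of_mem _ (List.mem_ofFn.2 ⟨i, rfl⟩)⟩))))
      (Term.var (Sum.inr (avr f l (funMap F as)
        (List.mem_flatMap.2 ⟨_, hc, List.mem_cons_self⟩))))
  | .rl R as _, hc =>
    .rel R fun i => Term.var (Sum.inr (avr f l (as i)
      (List.mem_flatMap.2 ⟨_, hc, List.mem_ofFn.2 ⟨i, rfl⟩⟩)))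
  | .anchor b, hc =>
    .equal (Term.var (Sum.inr (bvr (f := f) l b (List.mem_filterMap.2 ⟨_, hc, rfl⟩))))
      (Term.var (Sum.inr (avr f l (f b)
        (List.mem_flatMap.2 ⟨_, hc, List.mem_singleton.2 rfl⟩))))

end WitnessDefs

/-- Every finite set of true atomic constraints on `A` over `B` can be satisfied in `P`. -/
theorem exists_sat {f : B → A} (g : B →[L] P) (hf : IsImmersion (L := L) f)
    (hP : Nonempty P) (l : List (Con L A B)) :
    ∃ σ : A → P, ∀ c ∈ l, Con.sat f (⇑g) σ c := by
  classical
  cases l with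
  | nil => exact ⟨fun _ => hP.some, by simp⟩
  | cons c₀ l₀ =>
    set l : List (Con L A B) := c₀ :: l₀ with hldef
    have hmem₀ : c₀ ∈ l := List.mem_cons_self
    set k : ℕ := (bsL (L := L) (A := A) l).length with hk
    set m : ℕ := (elemsL f l).length with hm
    let θ : PosFormula L Empty (k + m) :=
      PosFormula.conjL (conOf f l c₀ hmem₀)
        (l₀.attach.map fun x => conOf f l x.1 (List.mem_cons_of_mem c₀ x.2))
    let bt : Fin k → B := fun j => (bsL (L := L) (A := A) l).get j
    -- realization of θ in A
    let vA : Fin (k + m) → A := Fin.append (fun j => f (bt j)) ((elemsL f l).get)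
    have hvalA : ∀ (aa : A) (h : aa ∈ elemsL f l), vA (avr f l aa h) = aa := by
      intro aa h
      show Fin.append _ _ (Fin.natAdd _ _) = aa
      rw [Fin.append_right]
      simp only [List.get_eq_getElem]
      exact List.getElem_idxOf (List.idxOf_lt_length_iff.2 h)
    have hvalB : ∀ (b : B) (h : b ∈ bsL (L := L) (A := A) l),
        vA (bvr (f := f) l b h) = f b := by
      intro b h
      show Fin.append _ _ (Fin.castAdd _ _) = f b
      rw [Fin.append_left]
      simp only [bt, List.get_eq_getElem]
      rw [List.getElem_idxOf (List.idxOf_lt_length_iff.2 h)]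
    have hgenA : ∀ (c : Con L A B) (hc : c ∈ l), (conOf f l c hc).Realize Empty.elim vA := by
      intro c hc
      cases c with
      | fn F as =>
        show Term.realize _ _ = Term.realize _ _
        simp only [Term.realize, Sum.elim_inr, hvalA]
        exact (congrArg (funMap F) (funext fun i => hvalA _ _)).trans (hvalA _ _).symm
      | rl R as h =>
        show Structure.RelMap R _
        have : (fun i => Term.realize (L := L) (Sum.elim Empty.elim vA)
            (Term.var (Sum.inr (avr f l (as i)
              (List.mem_flatMap.2 ⟨Con.rl R as h, hc, List.mem_ofFn.2 ⟨i, rfl⟩⟩))))) = as := by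
          funext i
          simp only [Term.realize, Sum.elim_inr, hvalA]
          exact hvalA _ _
        rw [this]
        exact h
      | anchor b =>
        show Term.realize _ _ = Term.realize _ _
        simp only [Term.realize, Sum.elim_inr, hvalA, hvalB]
        exact (hvalB _ _).trans (hvalA _ _).symm
    have hArealθ : θ.Realize Empty.elim vA := by
      rw [PosFormula.realize_conjL]
      refine ⟨hgenA _ _, ?_⟩
      intro ψ hψ
      obtain ⟨⟨c, hc⟩, _, rfl⟩ := List.mem_map.1 hψ
      exact hgenA _ _
    have hAexs : PosFormula.Realize (M := A) θ.exs Empty.elim (fun j => f (bt j)) :=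
      (PosFormula.realize_exs θ _ _).2 ⟨(elemsL f l).get, hArealθ⟩
    have hBexs : PosFormula.Realize (M := B) θ.exs Empty.elim bt :=
      (hf θ.exs bt).2 hAexs
    have hPexs : PosFormula.Realize (M := P) θ.exs Empty.elim (⇑g ∘ bt) := by
      have h1 := realize_of_hom g θ.exs Empty.elim bt hBexs
      have he : (⇑g ∘ (Empty.elim : Empty → B)) = (Empty.elim : Empty → P) :=
        funext fun e => e.elim
      rwa [he] at h1
    obtain ⟨p, hPrealθ⟩ := (PosFormula.realize_exs θ _ _).1 hPexs
    set vP : Fin (k + m) → P := Fin.append (⇑g ∘ bt) p with hvPdef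
    have hvPB : ∀ (b : B) (h : b ∈ bsL (L := L) (A := A) l),
        vP (bvr (f := f) l b h) = g b := by
      intro b h
      show Fin.append _ _ (Fin.castAdd _ _) = g b
      rw [Fin.append_left]
      simp only [Function.comp_apply, bt, List.get_eq_getElem]
      rw [List.getElem_idxOf (List.idxOf_lt_length_iff.2 h)]
    have hgenP : ∀ (c : Con L A B) (hc : c ∈ l), (conOf f l c hc).Realize Empty.elim vP := by
      rw [PosFormula.realize_conjL] at hPrealθ
      obtain ⟨h₀, hrest⟩ := hPrealθ
      intro c hc
      rcases List.mem_cons.1 hc with rfl | hc'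
      · exact h₀
      · exact hrest _ (List.mem_map.2 ⟨⟨c, hc'⟩, List.mem_attach _ _, rfl⟩)
    refine ⟨fun a => if h : a ∈ elemsL f l then vP (avr f l a h) else hP.some, ?_⟩
    set σ : A → P := fun a => if h : a ∈ elemsL f l then vP (avr f l a h) else hP.some with hσdef
    have hσ : ∀ (aa : A) (h : aa ∈ elemsL f l), σ aa = vP (avr f l aa h) := by
      intro aa h
      simp only [σ, dif_pos h]
    intro c hc
    have hcr := hgenP c hc
    cases c with
    | fn F as =>
      have h1 : funMap F (fun i => vP (avr f l (as i)
            (List.mem_flatMap.2 ⟨_, hc, List.mem_cons_of_mem _ (List.mem_ofFn.2 ⟨i, rfl⟩)⟩))) =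
          vP (avr f l (funMap F as) (List.mem_flatMap.2 ⟨_, hc, List.mem_cons_self⟩)) := hcr
      show σ (funMap F as) = funMap F (σ ∘ as)
      rw [hσ _ (List.mem_flatMap.2 ⟨_, hc, List.mem_cons_self⟩)]
      rw [← h1]
      congr 1
      funext i
      exact (hσ (as i)
        (List.mem_flatMap.2 ⟨_, hc, List.mem_cons_of_mem _ (List.mem_ofFn.2 ⟨i, rfl⟩)⟩)).symm
    | rl R as h =>
      have h1 : Structure.RelMap R (fun i => vP (avr f l (as i)
          (List.mem_flatMap.2 ⟨_, hc, List.mem_ofFn.2 ⟨i, rfl⟩⟩))) := hcr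
      show Structure.RelMap R (σ ∘ as)
      have h2 : (σ ∘ as) = fun i => vP (avr f l (as i)
          (List.mem_flatMap.2 ⟨_, hc, List.mem_ofFn.2 ⟨i, rfl⟩⟩)) := by
        funext i
        exact hσ (as i) _
      rw [h2]
      exact h1
    | anchor b =>
      have h1 : vP (bvr (f := f) l b (List.mem_filterMap.2 ⟨_, hc, rfl⟩)) =
          vP (avr f l (f b) (List.mem_flatMap.2 ⟨_, hc, List.mem_singleton.2 rfl⟩)) := hcr
      show σ (f b) = g b
      rw [hσ _ (List.mem_flatMap.2 ⟨_, hc, List.mem_singleton.2 rfl⟩), ← h1,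
        hvPB b (List.mem_filterMap.2 ⟨_, hc, rfl⟩)]

end Stmt16Aux

/-- If `M` is a pec model of an h-inductive theory `T` and `f : N → M` is an immersion,
then `N` is also a pec model of `T`. -/
theorem stmt16 (T : Set (BasicHInd L)) (A B : Type w) [L.Structure A] [L.Structure B]
    (hA : IsPec T A) (f : B → A) (hf : IsImmersion (L := L) f) :
    IsPec T B := by
  classical
  have hBT : ModelsHInd B T := by
    intro φ hφ xs hlhs
    have hA1 := (hf φ.lhs xs).1 hlhs
    have hA2 := hA.1 φ hφ (f ∘ xs) hA1
    exact (hf φ.rhs xs).2 hA2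
  refine ⟨hBT, ?_⟩
  intro P _ hPT g
  rcases isEmpty_or_nonempty P with hPe | hPe
  · -- degenerate case: `P` (hence `B` and `A`) is empty
    have hBe : IsEmpty B := ⟨fun b => hPe.false (g b)⟩
    have hAe : IsEmpty A := by
      by_contra h
      rw [not_isEmpty_iff] at h
      obtain ⟨a⟩ := h
      have hArr : PosFormula.Realize (L := L)
          (.ex (.equal (Term.var (Sum.inr 0)) (Term.var (Sum.inr 0))))
          (Empty.elim : Empty → A) (fun i : Fin 0 => i.elim0) := ⟨a, rfl⟩
      have he : (f ∘ (fun i : Fin 0 => i.elim0) : Fin 0 → A) = fun i : Fin 0 => i.elim0 :=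
        Subsingleton.elim _ _
      have hB := (hf (.ex (.equal (Term.var (Sum.inr 0)) (Term.var (Sum.inr 0))))
        (fun i : Fin 0 => i.elim0)).2 (by rw [he]; exact hArr)
      obtain ⟨b, -⟩ := hB
      exact hBe.false b
    have h₀ : A →[L] P := by
      refine ⟨fun a => (hAe.false a).elim, ?_, ?_⟩
      · intro n F x
        exact (hAe.false (funMap F x)).elim
      · intro n R x hx
        cases n with
        | succ n => exact (hAe.false (x 0)).elim
        | zero =>
          have hx' : Structure.RelMap R (f ∘ (fun i : Fin 0 => i.elim0) : Fin 0 → A) := by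
            rw [show (f ∘ (fun i : Fin 0 => i.elim0) : Fin 0 → A) = x from
              Subsingleton.elim _ _]
            exact hx
          have hBR : PosFormula.Realize (L := L)
              (.rel R (fun i : Fin 0 => i.elim0)) (Empty.elim : Empty → B)
              (fun i : Fin 0 => i.elim0) := by
            have := (hf (.rel R (fun i : Fin 0 => (i.elim0 : L.Term (Empty ⊕ Fin 0))))
              (fun i : Fin 0 => i.elim0)).2
            apply this
            show Structure.RelMap R _
            rw [show (fun i : Fin 0 =>
              Term.realize (L := L) (Sum.elim Empty.elim (f ∘ fun i : Fin 0 => i.elim0))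
                (i.elim0 : L.Term (Empty ⊕ Fin 0))) = (f ∘ (fun i : Fin 0 => i.elim0) : Fin 0 → A)
                from Subsingleton.elim _ _]
            exact hx'
          have hPR := g.map_rel R _ hBR
          rw [show (⇑g ∘ fun i : Fin 0 =>
            Term.realize (L := L) (Sum.elim Empty.elim (fun i : Fin 0 => i.elim0))
              (i.elim0 : L.Term (Empty ⊕ Fin 0))) =
              ((fun a => (hAe.false a).elim) ∘ x : Fin 0 → P) from Subsingleton.elim _ _] at hPR
          exact hPR
    have himm : IsImmersion (L := L) (⇑h₀) := hA.2 P hPT h₀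
    intro n φ xs
    have e3 : (⇑h₀ ∘ (f ∘ xs)) = ⇑g ∘ xs := funext fun i => (hBe.false (xs i)).elim
    refine (hf φ xs).trans ?_
    have := himm φ (f ∘ xs)
    rw [e3] at this
    exact this
  · -- main case: `P` is nonempty
    set ι : Type w := A → P with hι
    -- the filter of constraint-satisfying assignments
    set G : Set (Set ι) := {S | ∃ c : Con L A B, S = {σ : ι | Con.sat f (⇑g) σ c}} with hG
    have hFIP : ∀ t ⊆ G, t.Finite → (⋂₀ t).Nonempty := by
      intro t ht hfin
      obtain ⟨s, rfl⟩ := hfin.exists_finset_coe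
      let lc : List (Con L A B) := s.toList.attach.map fun x =>
        Classical.choose (ht (Finset.mem_coe.2 (Finset.mem_toList.1 x.2)))
      obtain ⟨σ, hσ⟩ := exists_sat g hf hPe lc
      refine ⟨σ, ?_⟩
      rw [Set.mem_sInter]
      intro V hV
      have hVs : V ∈ s.toList := Finset.mem_toList.2 (Finset.mem_coe.1 hV)
      have hcmem : Classical.choose (ht (Finset.mem_coe.2 (Finset.mem_toList.1 hVs))) ∈ lc :=
        List.mem_map.2 ⟨⟨V, hVs⟩, List.mem_attach _ _, rfl⟩
      have hspec := Classical.choose_spec (ht (Finset.mem_coe.2 (Finset.mem_toList.1 hVs)))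
      rw [hspec]
      exact hσ _ hcmem
    have hgen : (Filter.generate G).NeBot := Filter.generate_neBot_iff.2 hFIP
    let u : Ultrafilter ι := @Ultrafilter.of _ (Filter.generate G) hgen
    have hu : ∀ c : Con L A B, {σ : ι | Con.sat f (⇑g) σ c} ∈ u := by
      intro c
      have h1 : {σ : ι | Con.sat f (⇑g) σ c} ∈ Filter.generate G :=
        Filter.mem_generate_iff.2 ⟨{_}, Set.singleton_subset_iff.2 ⟨c, rfl⟩,
          Set.finite_singleton _, by rw [Set.sInter_singleton]⟩
      exact (@Ultrafilter.of_le _ (Filter.generate G) hgen) h1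
    haveI : ∀ _ : ι, Nonempty P := fun _ => hPe
    letI : Setoid (ι → P) := (↑u : Filter ι).productSetoid fun _ : ι => P
    -- the ultrapower
    set Q : Type w := Ultrapower P ι u with hQ
    -- Łoś for positive formulas
    have los : ∀ {n : ℕ} (φ : PosFormula L Empty n) (xs : Fin n → ι → P),
        PosFormula.Realize (M := Q) φ Empty.elim (fun i => Quotient.mk' (xs i)) ↔
          ∀ᶠ σ : ι in ↑u, PosFormula.Realize (M := P) φ Empty.elim (fun i => xs i σ) := by
      intro n φ xs
      refine (PosFormula.realize_toBF (M := Q) φ _ _).symm.trans ?_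
      have hb := Ultraproduct.boundedFormula_realize_cast (u := u)
        (M := fun _ : ι => P) φ.toBF (fun e : Empty => e.elim) xs
      have he : (fun i : Empty => (Quotient.mk' (i.elim) : (↑u : Filter ι).Product fun _ => P)) =
          (Empty.elim : Empty → (↑u : Filter ι).Product fun _ => P) := funext fun e => e.elim
      rw [he] at hb
      refine hb.trans (Filter.eventually_congr (Filter.Eventually.of_forall fun σ => ?_))
      have he2 : (fun i : Empty => ((i.elim : ι → P) σ : P)) = (Empty.elim : Empty → P) :=
        funext fun e => e.elim
      rw [he2]
      exact PosFormula.realize_toBF φ _ _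
    -- the diagonal map
    let kdiag : P → Q := fun p => Quotient.mk' (fun _ : ι => p)
    -- the homomorphism `A → Q`
    let hQhom : A →[L] Q := by
      refine ⟨fun a => Quotient.mk' (fun σ : ι => σ a), ?_, ?_⟩
      · intro n F x
        show (Quotient.mk' (fun σ : ι => σ (funMap F x)) : Q) = funMap F _
        have h2 : (funMap F (fun i => (Quotient.mk' (fun σ : ι => σ (x i)) : Q))) =
            Quotient.mk' (fun σ : ι => funMap F fun i => σ (x i)) :=
          Ultraproduct.funMap_cast F (fun i => fun σ : ι => σ (x i))
        refine Eq.trans ?_ h2.symm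
        exact Quotient.sound' (hu (Con.fn F x))
      · intro n R x hx
        show Structure.RelMap R _
        have := (relMap_quotient_mk' ((↑u : Filter ι).productSetoid fun _ => P) R
          (fun i => fun σ : ι => σ (x i))).2
        apply this
        exact hu (Con.rl R x hx)
    -- the square commutes
    have hcomm : ∀ b : B, hQhom (f b) = kdiag (g b) := fun b =>
      Quotient.sound' (hu (Con.anchor b))
    -- `Q` is a model of `T`
    have hQT : ModelsHInd Q T := by
      intro φ hφ xs hlhs
      have hrep : ∀ i, ∃ y : ι → P, (Quotient.mk' y : Q) = xs i := fun i => by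
        obtain ⟨y, hy⟩ := Quotient.exists_rep (xs i)
        exact ⟨y, hy⟩
      choose ys hys using hrep
      have hxs : xs = fun i => (Quotient.mk' (ys i) : Q) := funext fun i => (hys i).symm
      rw [hxs] at hlhs ⊢
      have h1 := (los φ.lhs ys).1 hlhs
      exact (los φ.rhs ys).2 (h1.mono fun σ h => hPT φ hφ _ h)
    -- conclude
    have himmQ : IsImmersion (L := L) (⇑hQhom) := hA.2 Q hQT hQhom
    have kimm : ∀ {n : ℕ} (φ : PosFormula L Empty n) (xs : Fin n → P),
        PosFormula.Realize (M := P) φ Empty.elim xs ↔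
          PosFormula.Realize (M := Q) φ Empty.elim (kdiag ∘ xs) := by
      intro n φ xs
      have := los φ (fun i => fun _ : ι => xs i)
      rw [Filter.eventually_const] at this
      exact this.symm
    intro n φ xs
    refine (hf φ xs).trans ((himmQ φ (f ∘ xs)).trans ?_)
    rw [show (⇑hQhom ∘ (f ∘ xs)) = (kdiag ∘ (⇑g ∘ xs)) from funext fun i => hcomm (xs i)]
    exact (kimm φ (⇑g ∘ xs)).symm

end PosLogic
end
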